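/- arXiv:2601.18665 — 5 statements merged into one kernel-verified Lean document; each statement's English description precedes it below -/
import Mathlib

section
/- Let α ≥ 1 be a real number. Then the n-dimensional integrals over the unit cube of the ratio of the α-th power sum to the first power sum converge: lim_{n→∞} ∫_{(0,1)^n} (x_1^α + ⋯ + x_n^α)/(x_1 + ⋯ + x_n) dx_1 ⋯ dx_n = 2/(α+1). -/
open MeasureTheory Filter

namespace PowerSumRatioAux

noncomputable abbrev cube (n : ℕ) : Set (Fin n → ℝ) := Set.univ.pi fun _ => Set.Ioo (0:ℝ) 1
noncomputable abbrev ν (n : ℕ) : Measure (Fin n → ℝ) := volume.restrict (cube n)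

lemma cube_meas (n : ℕ) : MeasurableSet (cube n) :=
  MeasurableSet.univ_pi fun _ => measurableSet_Ioo

instance (n : ℕ) : IsProbabilityMeasure (ν n) := by
  constructor
  rw [Measure.restrict_apply_univ, volume_pi_pi]
  simp

lemma ae_mem (n : ℕ) : ∀ᵐ x ∂ν n, ∀ i, 0 < x i ∧ x i < 1 := by
  filter_upwards [ae_restrict_mem (cube_meas n)] with x hx i
  exact Set.mem_Ioo.mp (hx i (Set.mem_univ i))

/-- product formula -/
lemma prod_integral {n : ℕ} (g : Fin n → ℝ → ℝ) :
    ∫ x, (∏ i, g i (x i)) ∂ν n = ∏ i, ∫ t in Set.Ioo (0:ℝ) 1, g i t := by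
  rw [ν, ← integral_indicator (cube_meas n)]
  have : (cube n).indicator (fun x => ∏ i, g i (x i)) =
      fun x => ∏ i, (Set.Ioo (0:ℝ) 1).indicator (g i) (x i) := by
    funext x
    by_cases hx : x ∈ cube n
    · rw [Set.indicator_of_mem hx]
      exact (Finset.prod_congr rfl fun i _ =>
        (Set.indicator_of_mem (hx i (Set.mem_univ i)) _).symm)
    · rw [Set.indicator_of_notMem hx]
      have : ∃ i, x i ∉ Set.Ioo (0:ℝ) 1 := by
        by_contra h
        push_neg at h
        exact hx fun i _ => h i
      obtain ⟨i, hi⟩ := this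
      symm
      apply Finset.prod_eq_zero (Finset.mem_univ i)
      exact Set.indicator_of_notMem hi _
  rw [this, MeasureTheory.integral_fintype_prod_volume_eq_prod (f := fun i => (Set.Ioo (0:ℝ) 1).indicator (g i))]
  exact Finset.prod_congr rfl fun i _ => integral_indicator measurableSet_Ioo


lemma coord_integral (g : ℝ → ℝ) (i : Fin n) :
    ∫ x, g (x i) ∂ν n = ∫ t in Set.Ioo (0:ℝ) 1, g t := by
  have h := prod_integral (n := n) (fun k => if k = i then g else fun _ => 1)
  rw [show (fun x : Fin n → ℝ => g (x i)) = fun x => ∏ k, (if k = i then g (x k) else 1) by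
    funext x; rw [Finset.prod_ite_eq' Finset.univ i (fun k => g (x k))]; simp]
  rw [show (fun x : Fin n → ℝ => ∏ k, (if k = i then g (x k) else 1)) =
      fun x => ∏ k, (if k = i then g else fun _ => (1:ℝ)) (x k) by
    funext x; exact Finset.prod_congr rfl fun k _ => by split <;> rfl]
  rw [prod_integral]
  have : ∀ k : Fin n, (∫ t in Set.Ioo (0:ℝ) 1, (if k = i then g else fun _ => (1:ℝ)) t)
      = if k = i then (∫ t in Set.Ioo (0:ℝ) 1, g t) else 1 := by
    intro k; split
    · rfl
    · simp
  rw [Finset.prod_congr rfl fun k _ => this k, Finset.prod_ite_eq' Finset.univ i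
    (fun _ => ∫ t in Set.Ioo (0:ℝ) 1, g t)]
  simp

lemma pair_integral (g h : ℝ → ℝ) {i j : Fin n} (hij : i ≠ j) :
    ∫ x, g (x i) * h (x j) ∂ν n =
      (∫ t in Set.Ioo (0:ℝ) 1, g t) * (∫ t in Set.Ioo (0:ℝ) 1, h t) := by
  set G : Fin n → ℝ → ℝ := fun k => if k = i then g else if k = j then h else fun _ => 1 with hG
  have key : ∀ (a b : ℝ), (∏ k, (if k = i then a else if k = j then b else 1)) = a * b := by
    intro a b
    rw [← Finset.prod_subset (Finset.subset_univ ({i, j} : Finset (Fin n)))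
      (fun k _ hk => by
        simp only [Finset.mem_insert, Finset.mem_singleton] at hk
        push_neg at hk
        simp [hk.1, hk.2])]
    rw [Finset.prod_pair hij]
    simp [hij, hij.symm]
  have h1 : (fun x : Fin n → ℝ => g (x i) * h (x j)) = fun x => ∏ k, G k (x k) := by
    funext x
    rw [show ∏ k, G k (x k) = ∏ k, (if k = i then g (x i) else if k = j then h (x j) else 1) from
      Finset.prod_congr rfl fun k _ => by
        simp only [hG]; split_ifs with e1 e2 <;> simp_all]
    exact (key _ _).symm
  rw [h1, prod_integral]
  have h2 : ∀ k, (∫ t in Set.Ioo (0:ℝ) 1, G k t) =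
      (if k = i then (∫ t in Set.Ioo (0:ℝ) 1, g t) else if k = j then (∫ t in Set.Ioo (0:ℝ) 1, h t) else 1) := by
    intro k; simp only [hG]; split
    · rfl
    · split
      · rfl
      · simp
  rw [Finset.prod_congr rfl fun k _ => h2 k]
  exact key _ _

-- 1D integrals
lemma int_rpow {α : ℝ} (hα : 1 ≤ α) : ∫ t in Set.Ioo (0:ℝ) 1, t ^ α = 1 / (α + 1) := by
  rw [← integral_Ioc_eq_integral_Ioo, ← intervalIntegral.integral_of_le zero_le_one,
    integral_rpow (Or.inl (by linarith))]
  rw [Real.one_rpow, Real.zero_rpow (by linarith)]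
  ring

lemma int_lin : ∫ t in Set.Ioo (0:ℝ) 1, (1 - 2 * t) = 0 := by
  rw [← integral_Ioc_eq_integral_Ioo, ← intervalIntegral.integral_of_le zero_le_one,
    intervalIntegral.integral_sub intervalIntegrable_const (intervalIntegral.intervalIntegrable_id.const_mul 2),
    intervalIntegral.integral_const_mul, integral_id]
  norm_num

lemma int_lin_sq : ∫ t in Set.Ioo (0:ℝ) 1, (1 - 2 * t) ^ 2 = 1 / 3 := by
  rw [← integral_Ioc_eq_integral_Ioo, ← intervalIntegral.integral_of_le zero_le_one]
  have : ∀ t : ℝ, (1 - 2 * t) ^ 2 = 1 - 4 * t + 4 * t ^ 2 := fun t => by ring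
  simp_rw [this]
  rw [intervalIntegral.integral_add (intervalIntegrable_const.sub
      (intervalIntegral.intervalIntegrable_id.const_mul 4)) ((intervalIntegral.intervalIntegrable_pow 2).const_mul 4),
    intervalIntegral.integral_sub intervalIntegrable_const (intervalIntegral.intervalIntegrable_id.const_mul 4),
    intervalIntegral.integral_const_mul, intervalIntegral.integral_const_mul, integral_id,
    integral_pow]
  norm_num


lemma bdd_int {n : ℕ} {f : (Fin n → ℝ) → ℝ} (hm : AEStronglyMeasurable f (ν n)) {C : ℝ}
    (h : ∀ᵐ x ∂ν n, |f x| ≤ C) : Integrable f (ν n) :=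
  Integrable.mono' (integrable_const C) hm (by simpa [Real.norm_eq_abs] using h)

lemma int_a2 {n : ℕ} :
    ∫ x, ((n:ℝ) - 2 * ∑ i, x i) ^ 2 ∂ν n = (n : ℝ) / 3 := by
  have expand : ∀ x : Fin n → ℝ, ((n:ℝ) - 2 * ∑ i, x i) ^ 2
      = ∑ i, ∑ j, (1 - 2 * x i) * (1 - 2 * x j) := by
    intro x
    rw [← Finset.sum_mul_sum]
    have : ∑ i : Fin n, (1 - 2 * x i) = ((n:ℝ) - 2 * ∑ i, x i) := by
      rw [Finset.sum_sub_distrib, ← Finset.mul_sum]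
      simp
    rw [← this]; ring
  simp_rw [expand]
  have term_int : ∀ i j : Fin n, Integrable (fun x => (1 - 2 * x i) * (1 - 2 * x j)) (ν n) := by
    intro i j
    apply bdd_int (C := 1)
    · exact (((measurable_const.sub ((measurable_pi_apply i).const_mul 2)).mul
        (measurable_const.sub ((measurable_pi_apply j).const_mul 2)))).aestronglyMeasurable
    · filter_upwards [ae_mem n] with x hx
      rw [abs_mul]
      have b : ∀ k : Fin n, |1 - 2 * x k| ≤ 1 := fun k => by
        rw [abs_le]; constructor <;> nlinarith [(hx k).1, (hx k).2]
      nlinarith [b i, b j, abs_nonneg (1 - 2 * x i), abs_nonneg (1 - 2 * x j)]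
  rw [integral_finset_sum _ (fun i _ => integrable_finset_sum _ (fun j _ => term_int i j))]
  have : ∀ i : Fin n, ∫ x, (∑ j, (1 - 2 * x i) * (1 - 2 * x j)) ∂ν n = 1/3 := by
    intro i
    rw [integral_finset_sum _ (fun j _ => term_int i j)]
    have each : ∀ j : Fin n, (∫ x, (1 - 2 * x i) * (1 - 2 * x j) ∂ν n)
        = if j = i then 1/3 else 0 := by
      intro j
      by_cases h : j = i
      · subst h
        rw [if_pos rfl]
        have : (fun x : Fin n → ℝ => (1 - 2 * x j) * (1 - 2 * x j))
            = fun x => (fun t => (1 - 2*t)^2) (x j) := by funext x; ring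
        rw [this, coord_integral (fun t => (1 - 2*t)^2) j, int_lin_sq]
      · rw [if_neg h, pair_integral (fun t => 1 - 2*t) (fun t => 1 - 2*t) (Ne.symm h), int_lin]
        ring
    rw [Finset.sum_congr rfl fun j _ => each j, Finset.sum_ite_eq' Finset.univ i fun _ => (1:ℝ)/3]
    simp
  rw [Finset.sum_congr rfl fun i _ => this i, Finset.sum_const]
  simp [Finset.card_univ]
  ring

lemma key (α : ℝ) (hα : 1 ≤ α) (n : ℕ) (hn : 1 ≤ n) :
    |(∫ x, (∑ i, x i ^ α) / (∑ i, x i) ∂ν n) - 2/(α+1)| ≤ 2 / Real.sqrt n := by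
  have hn0 : (0:ℝ) < n := by exact_mod_cast hn
  have hs : 0 < Real.sqrt n := Real.sqrt_pos.mpr hn0
  have hss : Real.sqrt n * Real.sqrt n = n := Real.mul_self_sqrt (Nat.cast_nonneg n)
  have hα0 : (0:ℝ) ≤ α := by linarith
  set f : (Fin n → ℝ) → ℝ := fun x => (∑ i, x i ^ α) / (∑ i, x i) with hf
  set g : (Fin n → ℝ) → ℝ := fun x => (2/(n:ℝ)) * ∑ i, x i ^ α with hg
  set e : (Fin n → ℝ) → ℝ :=
    fun x => (Real.sqrt n)⁻¹ + Real.sqrt n * (((n:ℝ) - 2 * ∑ i, x i)/n)^2 with he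
  have mT : Measurable fun x : Fin n → ℝ => ∑ i, x i ^ α :=
    Finset.measurable_sum _ fun i _ =>
      (Real.continuous_rpow_const hα0).measurable.comp (measurable_pi_apply i)
  have mS : Measurable fun x : Fin n → ℝ => ∑ i, x i :=
    Finset.measurable_sum _ fun i _ => measurable_pi_apply i
  -- basic pointwise facts
  have hpt : ∀ᵐ x ∂ν n, (0 < ∑ i, x i) ∧ (∑ i, x i ^ α ≤ ∑ i, x i)
      ∧ (0 ≤ ∑ i, x i ^ α) ∧ (∑ i, x i ≤ (n:ℝ)) := by
    filter_upwards [ae_mem n] with x hx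
    have hne : (Finset.univ : Finset (Fin n)).Nonempty := by
      rw [Finset.univ_nonempty_iff]
      exact Fin.pos_iff_nonempty.mp hn
    refine ⟨Finset.sum_pos (fun i _ => (hx i).1) hne, ?_, ?_, ?_⟩
    · exact Finset.sum_le_sum fun i _ => by
        calc x i ^ α ≤ x i ^ (1:ℝ) :=
          Real.rpow_le_rpow_of_exponent_ge (hx i).1 (hx i).2.le hα
        _ = x i := Real.rpow_one _
    · exact Finset.sum_nonneg fun i _ => Real.rpow_nonneg (hx i).1.le _
    · calc ∑ i, x i ≤ ∑ _i : Fin n, (1:ℝ) := Finset.sum_le_sum fun i _ => (hx i).2.le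
        _ = (n:ℝ) := by simp
  have int_f : Integrable f (ν n) := by
    apply bdd_int ((mT.div mS).aestronglyMeasurable) (C := 1)
    filter_upwards [hpt] with x hx0
    obtain ⟨h1, h2, h3, h4⟩ := hx0
    simp only [Pi.div_apply]
    rw [abs_div, abs_of_nonneg h3, abs_of_pos h1, div_le_one h1]
    exact h2
  have int_T : Integrable (fun x : Fin n → ℝ => ∑ i, x i ^ α) (ν n) := by
    apply bdd_int mT.aestronglyMeasurable (C := (n:ℝ))
    filter_upwards [hpt] with x hx0
    obtain ⟨h1, h2, h3, h4⟩ := hx0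
    rw [abs_of_nonneg h3]; linarith
  have int_g : Integrable g (ν n) := int_T.const_mul _
  have int_q2 : Integrable (fun x : Fin n → ℝ => (((n:ℝ) - 2 * ∑ i, x i)/n)^2) (ν n) := by
    apply bdd_int (C := 1)
    · exact (((measurable_const.sub (mS.const_mul 2)).div_const _).pow_const 2).aestronglyMeasurable
    · filter_upwards [hpt] with x hx0
      obtain ⟨h1, h2, h3, h4⟩ := hx0
      rw [abs_pow, ← one_pow (M := ℝ) 2]
      apply pow_le_pow_left₀ (abs_nonneg _)
      rw [abs_div, abs_of_pos hn0, div_le_one hn0, abs_le]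
      constructor <;> nlinarith
  have int_e : Integrable e (ν n) := (integrable_const _).add (int_q2.const_mul _)
  -- integral of g
  have hIg : ∫ x, g x ∂ν n = 2/(α+1) := by
    rw [hg, integral_const_mul, integral_finset_sum _ (fun i _ => by
      apply bdd_int (C := 1)
      · exact ((Real.continuous_rpow_const hα0).measurable.comp
          (measurable_pi_apply i)).aestronglyMeasurable
      · filter_upwards [ae_mem n] with x hx
        rw [abs_of_nonneg (Real.rpow_nonneg (hx i).1.le _)]
        exact Real.rpow_le_one (hx i).1.le (hx i).2.le hα0)]
    have : ∀ i : Fin n, (∫ x, x i ^ α ∂ν n) = 1/(α+1) := fun i => by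
      rw [coord_integral (fun t => t ^ α) i, int_rpow hα]
    rw [Finset.sum_congr rfl fun i _ => this i, Finset.sum_const]
    simp only [Finset.card_univ, Fintype.card_fin, nsmul_eq_mul]
    field_simp
  -- integral of e
  have hIe : ∫ x, e x ∂ν n ≤ 2 / Real.sqrt n := by
    rw [he]
    rw [integral_add (integrable_const _) (int_q2.const_mul _), integral_const,
      integral_const_mul]
    have hq2 : ∫ x : Fin n → ℝ, (((n:ℝ) - 2 * ∑ i, x i)/(n:ℝ))^2 ∂ν n = 1/(3*(n:ℝ)) := by
      simp_rw [div_pow]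
      rw [integral_div, int_a2]
      field_simp
    rw [hq2]
    simp only [measureReal_def, measure_univ, ENNReal.toReal_one, smul_eq_mul, one_mul]
    rw [div_eq_mul_inv 2]
    have h1 : Real.sqrt n * (1/(3*n)) = (Real.sqrt n)⁻¹ / 3 := by
      rw [eq_div_iff (by norm_num : (3:ℝ) ≠ 0)]
      field_simp
      nlinarith [hss]
    rw [h1]
    have : (Real.sqrt n)⁻¹ ≥ 0 := by positivity
    linarith
  -- pointwise bound
  have hptb : ∀ᵐ x ∂ν n, |f x - g x| ≤ e x := by
    filter_upwards [hpt] with x hx0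
    obtain ⟨h1, h2, h3, h4⟩ := hx0
    set T := ∑ i, x i ^ α
    set S := ∑ i, x i
    set q : ℝ := ((n:ℝ) - 2 * S)/n with hq
    have hid : f x - g x = (T/S) * q := by
      rw [hf, hg, hq]
      show T / S - 2 / (n:ℝ) * T = T / S * (((n:ℝ) - 2 * S) / n)
      field_simp
    rw [hid, abs_mul]
    have hTS : |T/S| ≤ 1 := by
      rw [abs_div, abs_of_nonneg h3, abs_of_pos h1, div_le_one h1]; exact h2
    have habs : |q| ≤ (Real.sqrt n)⁻¹ + Real.sqrt n * q^2 := by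
      have key2 : Real.sqrt n * |q| ≤ 1 + (Real.sqrt n * Real.sqrt n) * q^2 := by
        nlinarith [sq_nonneg (Real.sqrt n * |q| - 1), sq_abs q, abs_nonneg q, hs]
      have h2 : |q| ≤ (1 + (Real.sqrt n * Real.sqrt n) * q^2)/Real.sqrt n := by
        rw [le_div_iff₀ hs]
        nlinarith [key2]
      calc |q| ≤ (1 + (Real.sqrt n * Real.sqrt n) * q^2)/Real.sqrt n := h2
        _ = (Real.sqrt n)⁻¹ + Real.sqrt n * q^2 := by
          rw [add_div, one_div, mul_assoc, mul_comm, mul_div_assoc, div_self hs.ne', mul_one]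
    calc |T/S| * |q| ≤ 1 * |q| := mul_le_mul_of_nonneg_right hTS (abs_nonneg q)
      _ = |q| := one_mul _
      _ ≤ e x := by rw [he]; exact habs
  -- conclude
  have hdiff : |(∫ x, f x ∂ν n) - 2/(α+1)| ≤ ∫ x, e x ∂ν n := by
    rw [← hIg, ← integral_sub int_f int_g]
    calc |∫ x, (f x - g x) ∂ν n| ≤ ∫ x, |f x - g x| ∂ν n := by
          simpa [Real.norm_eq_abs] using norm_integral_le_integral_norm (fun x => f x - g x) (μ := ν n)
      _ ≤ ∫ x, e x ∂ν n := integral_mono_ae (int_f.sub int_g).abs int_e hptb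
  exact hdiff.trans hIe


-- tendsto of 2/sqrt n
lemma sqrt_tendsto : Tendsto (fun n : ℕ => 2 / Real.sqrt n) atTop (nhds 0) := by
  apply Tendsto.div_atTop tendsto_const_nhds
  apply Filter.tendsto_atTop_atTop.mpr
  intro b
  refine ⟨⌈b * b⌉₊, fun n hn => ?_⟩
  rcases le_or_gt b 0 with hb | hb
  · exact hb.trans (Real.sqrt_nonneg _)
  · have h1 : b * b ≤ (n : ℝ) := by
      calc b * b ≤ (⌈b * b⌉₊ : ℝ) := Nat.le_ceil _
        _ ≤ (n : ℝ) := by exact_mod_cast hn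
    calc b = Real.sqrt (b * b) := (Real.sqrt_mul_self hb.le).symm
      _ ≤ Real.sqrt n := Real.sqrt_le_sqrt h1

end PowerSumRatioAux

/-- For a real `α ≥ 1`, the integrals over the unit cube `(0,1)^n` of the ratio of the
`α`-th power sum to the first power sum converge to `2/(α+1)` as `n → ∞`. -/
theorem tendsto_integral_powerSum_ratio (α : ℝ) (hα : 1 ≤ α) :
    Tendsto
      (fun n : ℕ =>
        ∫ x : Fin n → ℝ in Set.univ.pi (fun _ => Set.Ioo (0:ℝ) 1),
          (∑ i, x i ^ α) / (∑ i, x i))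
      atTop (nhds (2 / (α + 1))) := by
  have main : Tendsto (fun n : ℕ =>
      (∫ x, (∑ i, x i ^ α) / (∑ i, x i) ∂PowerSumRatioAux.ν n) - 2 / (α + 1))
      atTop (nhds 0) := by
    apply squeeze_zero_norm' _ PowerSumRatioAux.sqrt_tendsto
    filter_upwards [eventually_ge_atTop 1] with n hn
    simpa [Real.norm_eq_abs] using PowerSumRatioAux.key α hα n hn
  have := main.add (tendsto_const_nhds (x := 2 / (α + 1)))
  simpa using this
end

section
/- Let (X_i)_{i≥1} be a sequence of independent random variables, each uniformly distributed on the interval (0,1), and let k ≥ 1 be a fixed integer. Then almost surely, as n → ∞, the ratio σ_k^{(n)}/(S_1^{(n)})^k converges to 1/k!, where σ_k^{(n)} = Σ_{1 ≤ i_1 < ⋯ < i_k ≤ n} X_{i_1} ⋯ X_{i_k} is the k-th elementary symmetric polynomial of X_1,…,X_n and S_1^{(n)} = Σ_{i=1}^n X_i. -/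
open MeasureTheory Filter ProbabilityTheory

private lemma key_identity (A : Finset ℕ) (x : ℕ → ℝ) (k : ℕ) :
    (∑ i ∈ A, x i) * ∑ s ∈ A.powersetCard k, ∏ j ∈ s, x j
      = (k + 1 : ℝ) * ∑ t ∈ A.powersetCard (k+1), ∏ j ∈ t, x j
        + ∑ s ∈ A.powersetCard k, (∑ i ∈ s, x i) * ∏ j ∈ s, x j := by
  have step1 : (∑ i ∈ A, x i) * ∑ s ∈ A.powersetCard k, ∏ j ∈ s, x j
      = ∑ s ∈ A.powersetCard k, ∑ i ∈ A, x i * ∏ j ∈ s, x j := by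
    rw [Finset.mul_sum]
    exact Finset.sum_congr rfl fun s _ => by rw [Finset.sum_mul]
  have step2 : ∀ s ∈ A.powersetCard k,
      ∑ i ∈ A, x i * ∏ j ∈ s, x j
        = (∑ i ∈ A \ s, x i * ∏ j ∈ s, x j) + (∑ i ∈ s, x i) * ∏ j ∈ s, x j := by
    intro s hs
    have hsub : s ⊆ A := (Finset.mem_powersetCard.1 hs).1
    rw [← Finset.sum_sdiff hsub, Finset.sum_mul]
  have step3 : ∑ s ∈ A.powersetCard k, ∑ i ∈ A \ s, x i * ∏ j ∈ s, x j
      = ∑ t ∈ A.powersetCard (k+1), ∑ i ∈ t, ∏ j ∈ t, x j := by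
    rw [Finset.sum_sigma' (A.powersetCard k) (fun s => A \ s),
        Finset.sum_sigma' (A.powersetCard (k+1)) (fun t => t)]
    refine Finset.sum_bij' (fun p hp => ⟨insert p.2 p.1, p.2⟩)
      (fun q hq => ⟨q.1.erase q.2, q.2⟩) ?_ ?_ ?_ ?_ ?_
    · rintro ⟨s, i⟩ hp
      simp only [Finset.mem_sigma, Finset.mem_powersetCard, Finset.mem_sdiff] at hp
      simp only [Finset.mem_sigma, Finset.mem_powersetCard]
      refine ⟨⟨Finset.insert_subset hp.2.1 hp.1.1, ?_⟩, Finset.mem_insert_self _ _⟩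
      rw [Finset.card_insert_of_notMem hp.2.2, hp.1.2]
    · rintro ⟨t, i⟩ hq
      simp only [Finset.mem_sigma, Finset.mem_powersetCard] at hq
      simp only [Finset.mem_sigma, Finset.mem_powersetCard, Finset.mem_sdiff]
      refine ⟨⟨(Finset.erase_subset _ _).trans hq.1.1, ?_⟩, hq.1.1 hq.2, Finset.notMem_erase _ _⟩
      rw [Finset.card_erase_of_mem hq.2, hq.1.2]; rfl
    · rintro ⟨s, i⟩ hp
      simp only [Finset.mem_sigma, Finset.mem_powersetCard, Finset.mem_sdiff] at hp
      simp only [Sigma.mk.inj_iff, heq_eq_eq, and_true]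
      exact Finset.erase_insert hp.2.2
    · rintro ⟨t, i⟩ hq
      simp only [Finset.mem_sigma, Finset.mem_powersetCard] at hq
      simp only [Sigma.mk.inj_iff, heq_eq_eq, and_true]
      exact Finset.insert_erase hq.2
    · rintro ⟨s, i⟩ hp
      simp only [Finset.mem_sigma, Finset.mem_powersetCard, Finset.mem_sdiff] at hp
      exact (Finset.prod_insert hp.2.2).symm
  have step4 : ∑ t ∈ A.powersetCard (k+1), ∑ i ∈ t, ∏ j ∈ t, x j
      = (k + 1 : ℝ) * ∑ t ∈ A.powersetCard (k+1), ∏ j ∈ t, x j := by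
    rw [Finset.mul_sum]
    refine Finset.sum_congr rfl fun t ht => ?_
    rw [Finset.sum_const, (Finset.mem_powersetCard.1 ht).2, nsmul_eq_mul]
    push_cast; ring
  rw [step1, Finset.sum_congr rfl step2, Finset.sum_add_distrib, step3, step4]

private lemma det_tendsto (x : ℕ → ℝ) (hx : ∀ i, x i ∈ Set.Ioo (0:ℝ) 1)
    (hS : Tendsto (fun n => ∑ i ∈ Finset.range n, x i) atTop atTop) (k : ℕ) :
    Tendsto (fun n : ℕ =>
        (∑ s ∈ (Finset.range n).powersetCard k, ∏ i ∈ s, x i) /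
          (∑ i ∈ Finset.range n, x i) ^ k)
      atTop (nhds (1 / (Nat.factorial k : ℝ))) := by
  induction k with
  | zero => simpa using tendsto_const_nhds
  | succ k ih =>
    set S : ℕ → ℝ := fun n => ∑ i ∈ Finset.range n, x i with hSdef
    set E : ℕ → ℕ → ℝ := fun k n => ∑ s ∈ (Finset.range n).powersetCard k, ∏ i ∈ s, x i
      with hEdef
    have hEnonneg : ∀ k n, 0 ≤ E k n := fun k n =>
      Finset.sum_nonneg fun s _ => Finset.prod_nonneg fun i _ => (hx i).1.le
    have hR : ∀ n, (S n - k) * E k n ≤ (k + 1 : ℝ) * E (k+1) n ∧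
        (k + 1 : ℝ) * E (k+1) n ≤ S n * E k n := by
      intro n
      have hid := key_identity (Finset.range n) x k
      set R : ℝ := ∑ s ∈ (Finset.range n).powersetCard k, (∑ i ∈ s, x i) * ∏ j ∈ s, x j
        with hRdef
      have hR0 : 0 ≤ R := Finset.sum_nonneg fun s _ =>
        mul_nonneg (Finset.sum_nonneg fun i _ => (hx i).1.le)
          (Finset.prod_nonneg fun i _ => (hx i).1.le)
      have hRk : R ≤ (k : ℝ) * E k n := by
        rw [hRdef, hEdef, Finset.mul_sum]
        refine Finset.sum_le_sum fun s hs => ?_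
        have hcard := (Finset.mem_powersetCard.1 hs).2
        have h1 : ∑ i ∈ s, x i ≤ (k : ℝ) := by
          calc ∑ i ∈ s, x i ≤ ∑ i ∈ s, 1 := Finset.sum_le_sum fun i _ => (hx i).2.le
            _ = (s.card : ℝ) := by simp
            _ = (k : ℝ) := by rw [hcard]
        exact mul_le_mul_of_nonneg_right h1 (Finset.prod_nonneg fun i _ => (hx i).1.le)
      have hSE : S n * E k n = (k + 1 : ℝ) * E (k+1) n + R := hid
      constructor
      · nlinarith [hEnonneg k n]
      · nlinarith
    have hb : Tendsto (fun n => (E k n / S n ^ k) / (k + 1 : ℝ)) atTop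
        (nhds (1 / (Nat.factorial (k+1) : ℝ))) := by
      have := ih.div_const (k + 1 : ℝ)
      convert this using 2
      rw [Nat.factorial_succ]
      push_cast
      rw [div_div]
      ring_nf
    have hinv : Tendsto (fun n => (k : ℝ) / S n) atTop (nhds 0) := by
      have := hS.inv_tendsto_atTop
      have h2 := this.const_mul (k : ℝ)
      simpa [div_eq_mul_inv] using h2
    have ha : Tendsto (fun n => (1 - (k : ℝ) / S n) * ((E k n / S n ^ k) / (k + 1 : ℝ)))
        atTop (nhds (1 / (Nat.factorial (k+1) : ℝ))) := by
      have h1 : Tendsto (fun n => 1 - (k : ℝ) / S n) atTop (nhds 1) := by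
        have := hinv.const_sub 1
        simpa using this
      have := h1.mul hb
      simpa using this
    have hpos : ∀ᶠ n in atTop, 0 < S n := hS.eventually_gt_atTop 0
    refine tendsto_of_tendsto_of_tendsto_of_le_of_le' ha hb ?_ ?_
    · filter_upwards [hpos] with n hSn
      have hSk : (0:ℝ) < S n ^ k := pow_pos hSn k
      have hSk1 : (0:ℝ) < S n ^ (k+1) := pow_pos hSn (k+1)
      have h := (hR n).1
      have heq : (1 - (k : ℝ) / S n) * ((E k n / S n ^ k) / (k + 1 : ℝ))
          = ((S n - k) * E k n) / ((k+1) * S n ^ (k+1)) := by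
        field_simp
        ring_nf
      rw [heq, div_le_div_iff₀ (by positivity) hSk1]
      have : ((S n - k) * E k n) * S n ^ (k+1) ≤ ((k + 1 : ℝ) * E (k+1) n) * S n ^ (k+1) :=
        mul_le_mul_of_nonneg_right h hSk1.le
      calc ((S n - k) * E k n) * S n ^ (k+1) ≤ ((k + 1 : ℝ) * E (k+1) n) * S n ^ (k+1) := this
        _ = E (k+1) n * ((k+1) * S n ^ (k+1)) := by ring
    · filter_upwards [hpos] with n hSn
      have hSk : (0:ℝ) < S n ^ k := pow_pos hSn k
      have hSk1 : (0:ℝ) < S n ^ (k+1) := pow_pos hSn (k+1)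
      have h := (hR n).2
      rw [div_div, div_le_div_iff₀ hSk1 (by positivity)]
      have : ((k + 1 : ℝ) * E (k+1) n) * S n ^ k ≤ (S n * E k n) * S n ^ k :=
        mul_le_mul_of_nonneg_right h hSk.le
      calc E (k+1) n * (S n ^ k * (k+1)) = ((k + 1 : ℝ) * E (k+1) n) * S n ^ k := by ring
        _ ≤ (S n * E k n) * S n ^ k := this
        _ = E k n * S n ^ (k+1) := by rw [pow_succ]; ring

/-- If `(X i)` is an i.i.d. sequence of random variables uniformly distributed on `(0,1)`
and `k ≥ 1` is a fixed integer, then almost surely the ratio of the `k`-th elementary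
symmetric polynomial `σ_k⁽ⁿ⁾` of `X₁,…,Xₙ` to `(X₁ + ⋯ + Xₙ)^k` converges to `1/k!`. -/
theorem tendsto_esymm_div_pow_sum_ae
    {Ω : Type*} [MeasurableSpace Ω] (P : Measure Ω) [IsProbabilityMeasure P]
    (X : ℕ → Ω → ℝ) (hmeas : ∀ i, Measurable (X i))
    (hindep : iIndepFun X P)
    (hunif : ∀ i, Measure.map (X i) P = volume.restrict (Set.Ioo (0:ℝ) 1))
    (k : ℕ) (hk : 1 ≤ k) :
    ∀ᵐ ω ∂P,
      Tendsto
        (fun n : ℕ =>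
          (∑ s ∈ (Finset.range n).powersetCard k, ∏ i ∈ s, X i ω) /
            (∑ i ∈ Finset.range n, X i ω) ^ k)
        atTop (nhds (1 / (Nat.factorial k : ℝ))) := by
  have hIntIoo : IntegrableOn id (Set.Ioo (0:ℝ) 1) volume := by
    have : IntervalIntegrable (fun x : ℝ => x) volume 0 1 :=
      (continuous_id.intervalIntegrable 0 1)
    exact (this.1).mono_set Set.Ioo_subset_Ioc_self
  have hint : Integrable (X 0) P := by
    have := (integrable_map_measure (f := X 0) (g := id) (μ := P)
      aestronglyMeasurable_id (hmeas 0).aemeasurable).1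
    rw [hunif 0] at this
    exact this hIntIoo
  have hident : ∀ i, IdentDistrib (X i) (X 0) P P := fun i =>
    ⟨(hmeas i).aemeasurable, (hmeas 0).aemeasurable, by rw [hunif i, hunif 0]⟩
  have hpair : Pairwise (Function.onFun (fun f g => IndepFun f g P) X) :=
    fun i j hij => hindep.indepFun hij
  have hmean : ∫ ω, X 0 ω ∂P = 1/2 := by
    have h1 : ∫ ω, X 0 ω ∂P = ∫ x, x ∂(Measure.map (X 0) P) :=
      (integral_map (hmeas 0).aemeasurable aestronglyMeasurable_id).symm
    rw [h1, hunif 0]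
    have : ∫ x in Set.Ioo (0:ℝ) 1, x = ∫ x in (0:ℝ)..1, x := by
      rw [intervalIntegral.integral_of_le zero_le_one, integral_Ioc_eq_integral_Ioo]
    rw [this, integral_id]
    norm_num
  have hslln := strong_law_ae X hint hpair hident
  have hSinf : ∀ᵐ ω ∂P, Tendsto (fun n => ∑ i ∈ Finset.range n, X i ω) atTop atTop := by
    filter_upwards [hslln] with ω hω
    rw [hmean] at hω
    have h14 : ∀ᶠ (n : ℕ) in atTop, (1/4 : ℝ) < (n:ℝ)⁻¹ • ∑ i ∈ Finset.range n, X i ω :=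
      hω.eventually (eventually_gt_nhds (show (1/4:ℝ) < 1/2 by norm_num))
    refine tendsto_atTop_mono' atTop ?_
      ((tendsto_natCast_atTop_atTop (R := ℝ)).atTop_mul_const (by norm_num : (0:ℝ) < 1/4))
    filter_upwards [h14, eventually_ge_atTop 1] with n hn hn1
    have hnpos : (0:ℝ) < n := by exact_mod_cast hn1
    rw [smul_eq_mul, inv_mul_eq_div, lt_div_iff₀ hnpos] at hn
    linarith
  have hmem : ∀ᵐ ω ∂P, ∀ i, X i ω ∈ Set.Ioo (0:ℝ) 1 := by
    rw [ae_all_iff]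
    intro i
    have hmA : MeasurableSet (Set.Ioo (0:ℝ) 1) := measurableSet_Ioo
    rw [Filter.eventually_iff, mem_ae_iff]
    have : {ω | X i ω ∈ Set.Ioo (0:ℝ) 1}ᶜ = X i ⁻¹' (Set.Ioo (0:ℝ) 1)ᶜ := rfl
    rw [this, ← Measure.map_apply (hmeas i) hmA.compl, hunif i,
      Measure.restrict_apply hmA.compl]
    simp
  filter_upwards [hSinf, hmem] with ω hω hωmem
  exact det_tendsto (fun i => X i ω) hωmem hω k
end

section
/- Let a ≥ 0 be a real number. Then the integrals I_n(a) = ∫_{(0,1)^n} (Σ_{i=1}^n x_i^a)/(Σ_{i=1}^n sin(π x_i)) dx_1 ⋯ dx_n converge as n → ∞, with limit lim_{n→∞} I_n(a) = π/(2(a+1)). -/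
open MeasureTheory Filter Real Set

noncomputable section
namespace PowSin

/-- exp(-(t sin πx)) -/
def E (t x : ℝ) : ℝ := Real.exp (-(t * Real.sin (Real.pi * x)))

def phi (t : ℝ) : ℝ := ∫ x in Set.Ioo (0:ℝ) 1, E t x
def psi (a t : ℝ) : ℝ := ∫ x in Set.Ioo (0:ℝ) 1, x ^ a * E t x

lemma sin_pos {x : ℝ} (hx : x ∈ Set.Ioo (0:ℝ) 1) : 0 < Real.sin (Real.pi * x) :=
  Real.sin_pos_of_pos_of_lt_pi (mul_pos Real.pi_pos hx.1) (by nlinarith [Real.pi_pos, hx.2])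

lemma sin_le_one' (x : ℝ) : Real.sin (Real.pi * x) ≤ 1 := Real.sin_le_one _

lemma E_cont (t : ℝ) : Continuous (E t) := by
  unfold E; continuity

lemma E_pos (t x : ℝ) : 0 < E t x := Real.exp_pos _

lemma E_le_one {t x : ℝ} (ht : 0 ≤ t) (hx : x ∈ Set.Ioo (0:ℝ) 1) : E t x ≤ 1 := by
  rw [E, Real.exp_le_one_iff]
  have := sin_pos hx
  nlinarith

lemma E_integrableOn (t : ℝ) : IntegrableOn (E t) (Set.Ioo (0:ℝ) 1) := by
  exact ((E_cont t).integrableOn_Icc (a := 0) (b := 1)).mono_set Set.Ioo_subset_Icc_self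

lemma rpow_integrableOn {a : ℝ} (ha : 0 ≤ a) :
    IntegrableOn (fun x : ℝ => x ^ a) (Set.Ioo (0:ℝ) 1) := by
  have := intervalIntegral.intervalIntegrable_rpow' (a := 0) (b := 1) (r := a) (by linarith)
  rwa [intervalIntegrable_iff_integrableOn_Ioo_of_le (by norm_num)] at this

lemma rpow_meas (a : ℝ) : Measurable (fun x : ℝ => x ^ a) := by measurability

lemma rpowE_integrableOn {a : ℝ} (ha : 0 ≤ a) {t : ℝ} (ht : 0 ≤ t) :
    IntegrableOn (fun x : ℝ => x ^ a * E t x) (Set.Ioo (0:ℝ) 1) := by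
  have hm : AEStronglyMeasurable (fun x : ℝ => x ^ a * E t x) (volume.restrict (Set.Ioo (0:ℝ) 1)) :=
    ((rpow_meas a).mul (E_cont t).measurable).aestronglyMeasurable
  refine (rpow_integrableOn ha).mono' hm ?_
  filter_upwards [ae_restrict_mem measurableSet_Ioo] with x hx
  rw [Real.norm_eq_abs, abs_mul, abs_of_nonneg (Real.rpow_nonneg hx.1.le a),
    abs_of_pos (E_pos t x)]
  nlinarith [E_le_one ht hx, Real.rpow_nonneg hx.1.le a, E_pos t x]

lemma int_sin : ∫ x in Set.Ioo (0:ℝ) 1, Real.sin (Real.pi * x) = 2 / Real.pi := by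
  rw [← MeasureTheory.integral_Ioc_eq_integral_Ioo,
    ← intervalIntegral.integral_of_le (by norm_num : (0:ℝ) ≤ 1)]
  rw [intervalIntegral.integral_comp_mul_left (fun x => Real.sin x) Real.pi_ne_zero]
  simp [Real.cos_pi]
  field_simp
  ring

lemma int_rpow {a : ℝ} (ha : 0 ≤ a) :
    ∫ x in Set.Ioo (0:ℝ) 1, x ^ a = 1 / (a + 1) := by
  rw [← MeasureTheory.integral_Ioc_eq_integral_Ioo,
    ← intervalIntegral.integral_of_le (by norm_num : (0:ℝ) ≤ 1)]
  rw [integral_rpow (Or.inl (by linarith))]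
  rw [Real.one_rpow, Real.zero_rpow (by linarith)]
  ring


lemma vol_Ioo : (volume (Set.Ioo (0:ℝ) 1)).toReal = 1 := by simp

lemma int_one : ∫ _x in Set.Ioo (0:ℝ) 1, (1:ℝ) = 1 := by simp

lemma sin_integrableOn : IntegrableOn (fun x : ℝ => Real.sin (Real.pi * x)) (Set.Ioo (0:ℝ) 1) := by
  have : Continuous (fun x : ℝ => Real.sin (Real.pi * x)) := by continuity
  exact (this.integrableOn_Icc (a := 0) (b := 1)).mono_set Set.Ioo_subset_Icc_self

lemma int_affine (c1 c2 : ℝ) :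
    ∫ x in Set.Ioo (0:ℝ) 1, (c1 - c2 * Real.sin (Real.pi * x)) = c1 - c2 * (2 / Real.pi) := by
  rw [integral_sub (integrableOn_const (μ := volume) (s := Set.Ioo (0:ℝ) 1) (C := c1) (by simp))
      ((sin_integrableOn).const_mul c2), integral_const_mul, int_sin]
  simp

lemma phi_nonneg (t : ℝ) : 0 ≤ phi t :=
  setIntegral_nonneg measurableSet_Ioo (fun x _ => (E_pos t x).le)

lemma phi_le_one {t : ℝ} (ht : 0 ≤ t) : phi t ≤ 1 := by
  have h := setIntegral_mono_on (E_integrableOn t) (integrableOn_const (by simp))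
    measurableSet_Ioo (fun x hx => E_le_one ht hx)
  simpa [int_one, phi] using h.trans_eq int_one

lemma psi_nonneg (a t : ℝ) : 0 ≤ psi a t :=
  setIntegral_nonneg measurableSet_Ioo
    (fun x hx => mul_nonneg (Real.rpow_nonneg hx.1.le a) (E_pos t x).le)

lemma psi_le_one {a t : ℝ} (ha : 0 ≤ a) (ht : 0 ≤ t) : psi a t ≤ 1 := by
  have key : ∀ x ∈ Set.Ioo (0:ℝ) 1, x ^ a * E t x ≤ (1:ℝ) := by
    intro x hx
    have h1 : x ^ a ≤ 1 := Real.rpow_le_one hx.1.le hx.2.le ha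
    nlinarith [E_le_one ht hx, E_pos t x, Real.rpow_nonneg hx.1.le a]
  have h := setIntegral_mono_on (rpowE_integrableOn ha ht)
    (integrableOn_const (by simp)) measurableSet_Ioo key
  simp only [psi]
  exact h.trans_eq int_one

lemma phi_ge {t : ℝ} (ht : 0 ≤ t) : 1 - 2 / Real.pi * t ≤ phi t := by
  have hint : IntegrableOn (fun x : ℝ => 1 - t * Real.sin (Real.pi * x)) (Set.Ioo (0:ℝ) 1) :=
    (integrableOn_const (by simp)).sub (sin_integrableOn.const_mul t)
  have key : ∀ x ∈ Set.Ioo (0:ℝ) 1, 1 - t * Real.sin (Real.pi * x) ≤ E t x := by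
    intro x hx
    have := Real.add_one_le_exp (-(t * Real.sin (Real.pi * x)))
    rw [E]; linarith
  have h := setIntegral_mono_on hint (E_integrableOn t) measurableSet_Ioo key
  rw [int_affine 1 t] at h
  simp only [phi]
  linarith

lemma exp_neg_one_le : Real.exp (-1) ≤ 1 / 2 := by
  rw [Real.exp_neg]
  have h2 : (2:ℝ) ≤ Real.exp 1 := by have := Real.add_one_le_exp 1; linarith
  rw [show (1:ℝ)/2 = 2⁻¹ by norm_num, inv_le_inv₀ (Real.exp_pos 1) (by norm_num)]
  exact h2

lemma two_div_pi_ge : (1:ℝ) / 2 ≤ 2 / Real.pi := by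
  rw [div_le_div_iff₀ (by norm_num) Real.pi_pos]
  nlinarith [Real.pi_le_four]

lemma phi_le_lin {t : ℝ} (ht : 0 ≤ t) (ht1 : t ≤ 1) : phi t ≤ 1 - t / 4 := by
  have key : ∀ x ∈ Set.Ioo (0:ℝ) 1,
      E t x ≤ 1 - (1 - Real.exp (-1)) * (t * Real.sin (Real.pi * x)) := by
    intro x hx
    set v := t * Real.sin (Real.pi * x) with hv
    have hv0 : 0 ≤ v := mul_nonneg ht (sin_pos hx).le
    have hv1 : v ≤ 1 := by
      have := sin_le_one' x
      have := sin_pos hx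
      nlinarith
    have hc := convexOn_exp.2 (Set.mem_univ (0:ℝ)) (Set.mem_univ (-1:ℝ))
      (by linarith : (0:ℝ) ≤ 1 - v) hv0 (by ring)
    simp only [smul_eq_mul, mul_zero, zero_add, mul_neg, mul_one, Real.exp_zero] at hc
    rw [E, ← hv]
    nlinarith [hc]
  have hint : IntegrableOn
      (fun x : ℝ => 1 - (1 - Real.exp (-1)) * (t * Real.sin (Real.pi * x)))
      (Set.Ioo (0:ℝ) 1) := by
    refine (integrableOn_const (by simp)).sub ?_
    exact (sin_integrableOn.const_mul t).const_mul _
  have h := setIntegral_mono_on (E_integrableOn t) hint measurableSet_Ioo key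
  have hval : ∫ x in Set.Ioo (0:ℝ) 1,
      (1 - (1 - Real.exp (-1)) * (t * Real.sin (Real.pi * x)))
      = 1 - (1 - Real.exp (-1)) * t * (2 / Real.pi) := by
    rw [show (fun x : ℝ => 1 - (1 - Real.exp (-1)) * (t * Real.sin (Real.pi * x)))
        = (fun x : ℝ => 1 - ((1 - Real.exp (-1)) * t) * Real.sin (Real.pi * x)) by
          funext x; ring]
    rw [int_affine]
  rw [hval] at h
  simp only [phi]
  have h1 : (1:ℝ)/2 ≤ 1 - Real.exp (-1) := by have := exp_neg_one_le; linarith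
  have h2 := two_div_pi_ge
  have hpi : 0 < 2 / Real.pi := by positivity
  have k1 : (1:ℝ)/4 ≤ (1 - Real.exp (-1)) * (2/Real.pi) := by nlinarith
  nlinarith [mul_le_mul_of_nonneg_left k1 ht]

lemma phi_le_quad {t : ℝ} (ht : 0 ≤ t) (ht1 : t ≤ 1) :
    phi t ≤ 1 - 2 / Real.pi * t + t ^ 2 := by
  have key : ∀ x ∈ Set.Ioo (0:ℝ) 1,
      E t x ≤ (1 + t ^ 2) - t * Real.sin (Real.pi * x) := by
    intro x hx
    set v := t * Real.sin (Real.pi * x) with hv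
    have hv0 : 0 ≤ v := mul_nonneg ht (sin_pos hx).le
    have hv1 : v ≤ 1 := by
      have := sin_le_one' x; have := sin_pos hx; nlinarith
    have habs := Real.abs_exp_sub_one_sub_id_le (x := -v) (by rw [abs_neg, abs_of_nonneg hv0]; exact hv1)
    rw [abs_le] at habs
    have hvt : v ≤ t := by
      have := sin_le_one' x; nlinarith
    have hv2 : v ^ 2 ≤ t ^ 2 := by nlinarith
    rw [E, ← hv]
    have := habs.2
    simp only [neg_sq] at this
    linarith
  have hint : IntegrableOn
      (fun x : ℝ => (1 + t ^ 2) - t * Real.sin (Real.pi * x)) (Set.Ioo (0:ℝ) 1) :=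
    (integrableOn_const (by simp)).sub (sin_integrableOn.const_mul t)
  have h := setIntegral_mono_on (E_integrableOn t) hint measurableSet_Ioo key
  rw [int_affine (1 + t ^ 2) t] at h
  simp only [phi]
  linarith


lemma phi_anti {s t : ℝ} (hs : 0 ≤ s) (hst : s ≤ t) : phi t ≤ phi s := by
  refine setIntegral_mono_on (E_integrableOn t) (E_integrableOn s) measurableSet_Ioo ?_
  intro x hx
  rw [E, E, Real.exp_le_exp]
  have := (sin_pos hx).le
  nlinarith

lemma int_exp_Ioi {b : ℝ} (hb : 0 < b) : ∫ x in Set.Ioi (0:ℝ), Real.exp (-(b * x)) = 1 / b := by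
  have h := MeasureTheory.integral_comp_mul_left_Ioi (fun u => Real.exp (-u)) 0 hb
  simp only [mul_zero, smul_eq_mul] at h
  rw [show (fun x => Real.exp (-(b * x))) = (fun x => Real.exp (-(b * x))) from rfl]
  calc ∫ x in Set.Ioi (0:ℝ), Real.exp (-(b * x)) = b⁻¹ * ∫ x in Set.Ioi (0:ℝ), Real.exp (-x) := h
    _ = 1 / b := by rw [integral_exp_neg_Ioi]; simp

lemma exp_mul_integrableOn {b : ℝ} (hb : 0 < b) :
    IntegrableOn (fun x : ℝ => Real.exp (-(b * x))) (Set.Ioi (0:ℝ)) := by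
  have := exp_neg_integrableOn_Ioi 0 hb
  simpa [neg_mul] using this

lemma phi_le_inv {t : ℝ} (ht : 0 < t) : phi t ≤ 1 / t := by
  have key : ∀ x ∈ Set.Ioo (0:ℝ) 1,
      E t x ≤ Real.exp (-(2 * t * x)) + Real.exp (-(2 * t * (1 - x))) := by
    intro x hx
    rcases le_or_gt x (1/2) with hx2 | hx2
    · have hsin : 2 * x ≤ Real.sin (Real.pi * x) := by
        have := Real.mul_le_sin (x := Real.pi * x)
          (mul_nonneg Real.pi_pos.le hx.1.le) (by nlinarith [Real.pi_pos])
        calc 2 * x = 2 / Real.pi * (Real.pi * x) := by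
              field_simp
          _ ≤ Real.sin (Real.pi * x) := this
      have h1 : E t x ≤ Real.exp (-(2 * t * x)) := by
        rw [E, Real.exp_le_exp]; nlinarith
      nlinarith [Real.exp_pos (-(2 * t * (1 - x)))]
    · have hsin : 2 * (1 - x) ≤ Real.sin (Real.pi * x) := by
        have heq : Real.sin (Real.pi * x) = Real.sin (Real.pi * (1 - x)) := by
          rw [show Real.pi * (1 - x) = Real.pi - Real.pi * x by ring, Real.sin_pi_sub]
        have := Real.mul_le_sin (x := Real.pi * (1 - x))
          (mul_nonneg Real.pi_pos.le (by linarith [hx.2]))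
          (by nlinarith [Real.pi_pos, hx2])
        rw [heq]
        calc 2 * (1 - x) = 2 / Real.pi * (Real.pi * (1 - x)) := by field_simp
          _ ≤ _ := this
      have h1 : E t x ≤ Real.exp (-(2 * t * (1 - x))) := by
        rw [E, Real.exp_le_exp]; nlinarith
      nlinarith [Real.exp_pos (-(2 * t * x))]
  have hbt : (0:ℝ) < 2 * t := by linarith
  have hi1 : IntegrableOn (fun x : ℝ => Real.exp (-(2 * t * x))) (Set.Ioo (0:ℝ) 1) :=
    (exp_mul_integrableOn hbt).mono_set (Set.Ioo_subset_Ioi_self)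
  have hi2 : IntegrableOn (fun x : ℝ => Real.exp (-(2 * t * (1 - x)))) (Set.Ioo (0:ℝ) 1) := by
    have : Continuous (fun x : ℝ => Real.exp (-(2 * t * (1 - x)))) := by continuity
    exact (this.integrableOn_Icc (a := 0) (b := 1)).mono_set Set.Ioo_subset_Icc_self
  have h := setIntegral_mono_on (E_integrableOn t) (hi1.add hi2) measurableSet_Ioo key
  have e1 : ∫ x in Set.Ioo (0:ℝ) 1, Real.exp (-(2 * t * x)) ≤ 1 / (2 * t) := by
    rw [← int_exp_Ioi hbt]
    refine setIntegral_mono_set (exp_mul_integrableOn hbt) ?_ ?_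
    · filter_upwards with x using (Real.exp_pos _).le
    · filter_upwards with x hx using Set.Ioo_subset_Ioi_self hx
  have e2 : ∫ x in Set.Ioo (0:ℝ) 1, Real.exp (-(2 * t * (1 - x))) ≤ 1 / (2 * t) := by
    have heq : ∫ x in Set.Ioo (0:ℝ) 1, Real.exp (-(2 * t * (1 - x)))
        = ∫ x in Set.Ioo (0:ℝ) 1, Real.exp (-(2 * t * x)) := by
      rw [← MeasureTheory.integral_Ioc_eq_integral_Ioo,
        ← intervalIntegral.integral_of_le (by norm_num : (0:ℝ) ≤ 1),
        ← MeasureTheory.integral_Ioc_eq_integral_Ioo,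
        ← intervalIntegral.integral_of_le (by norm_num : (0:ℝ) ≤ 1)]
      have := intervalIntegral.integral_comp_sub_left (a := 0) (b := 1)
        (fun x => Real.exp (-(2 * t * x))) 1
      simpa using this
    rw [heq]; exact e1
  simp only [Pi.add_apply] at h
  rw [integral_add hi1 hi2] at h
  simp only [phi]
  calc ∫ x in Set.Ioo (0:ℝ) 1, E t x ≤ _ := h
    _ ≤ 1 / (2*t) + 1 / (2*t) := add_le_add e1 e2
    _ = 1 / t := by field_simp; norm_num

lemma psi_ge {a : ℝ} (ha : 0 ≤ a) {u : ℝ} (hu : 0 ≤ u) :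
    1 / (a + 1) - u ≤ psi a u := by
  have key : ∀ x ∈ Set.Ioo (0:ℝ) 1,
      x ^ a - u * Real.sin (Real.pi * x) ≤ x ^ a * E u x := by
    intro x hx
    have hxa0 : 0 ≤ x ^ a := Real.rpow_nonneg hx.1.le a
    have hxa1 : x ^ a ≤ 1 := Real.rpow_le_one hx.1.le hx.2.le ha
    have hE : 1 - u * Real.sin (Real.pi * x) ≤ E u x := by
      have := Real.add_one_le_exp (-(u * Real.sin (Real.pi * x)))
      rw [E]; linarith
    have hs := (sin_pos hx).le
    nlinarith [mul_le_mul_of_nonneg_left hE hxa0,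
      mul_le_mul_of_nonneg_right hxa1 (mul_nonneg hu hs)]
  have hint : IntegrableOn (fun x : ℝ => x ^ a - u * Real.sin (Real.pi * x))
      (Set.Ioo (0:ℝ) 1) := (rpow_integrableOn ha).sub (sin_integrableOn.const_mul u)
  have h := setIntegral_mono_on hint (rpowE_integrableOn ha hu) measurableSet_Ioo key
  have hval : ∫ x in Set.Ioo (0:ℝ) 1, (x ^ a - u * Real.sin (Real.pi * x))
      = 1 / (a + 1) - u * (2 / Real.pi) := by
    rw [integral_sub (rpow_integrableOn ha) (sin_integrableOn.const_mul u),
      integral_const_mul, int_sin, int_rpow ha]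
  rw [hval] at h
  have h2 : u * (2 / Real.pi) ≤ u := by
    have : 2 / Real.pi ≤ 1 := by
      rw [div_le_one Real.pi_pos]; exact Real.two_le_pi
    nlinarith
  simp only [psi]
  linarith

lemma psi_le_recip {a : ℝ} (ha : 0 ≤ a) {u : ℝ} (hu : 0 ≤ u) :
    psi a u ≤ 1 / (a + 1) := by
  have key : ∀ x ∈ Set.Ioo (0:ℝ) 1, x ^ a * E u x ≤ x ^ a := by
    intro x hx
    have hxa0 : 0 ≤ x ^ a := Real.rpow_nonneg hx.1.le a
    nlinarith [E_le_one hu hx, E_pos u x]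
  have h := setIntegral_mono_on (rpowE_integrableOn ha hu) (rpow_integrableOn ha)
    measurableSet_Ioo key
  rw [int_rpow ha] at h
  exact h

lemma phi_measurable : Measurable phi := by
  have hc : StronglyMeasurable (fun p : ℝ × ℝ => E p.1 p.2) := by
    apply Continuous.stronglyMeasurable
    unfold E; continuity
  have := hc.integral_prod_right' (ν := volume.restrict (Set.Ioo (0:ℝ) 1))
  exact this.measurable

lemma psi_measurable (a : ℝ) : Measurable (psi a) := by
  have hm : Measurable (fun p : ℝ × ℝ => p.2 ^ a * E p.1 p.2) := by
    apply Measurable.mul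
    · exact (rpow_meas a).comp measurable_snd
    · apply Continuous.measurable; unfold E; continuity
  have := hm.stronglyMeasurable.integral_prod_right' (ν := volume.restrict (Set.Ioo (0:ℝ) 1))
  exact this.measurable


section ProductSpace

variable {n : ℕ} (a t : ℝ)

def cube (n : ℕ) : Set (Fin n → ℝ) := Set.univ.pi (fun _ => Set.Ioo (0:ℝ) 1)

lemma cube_measurableSet : MeasurableSet (cube n) :=
  MeasurableSet.univ_pi (fun _ => measurableSet_Ioo)

lemma volume_cube : volume (cube n) = 1 := by
  rw [cube, volume_pi_pi]
  simp

lemma indicator_prod_eq (i : Fin n) (x : Fin n → ℝ) :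
    (cube n).indicator (fun x => x i ^ a * ∏ j, E t (x j)) x
      = ∏ j, (Set.Ioo (0:ℝ) 1).indicator
          (fun y => (if j = i then y ^ a else 1) * E t y) (x j) := by
  by_cases hx : x ∈ cube n
  · rw [Set.indicator_of_mem hx]
    have hxj : ∀ j, x j ∈ Set.Ioo (0:ℝ) 1 := fun j => hx j (Set.mem_univ j)
    have : ∀ j : Fin n, (Set.Ioo (0:ℝ) 1).indicator
        (fun y => (if j = i then y ^ a else 1) * E t y) (x j)
        = (if j = i then (x j) ^ a else 1) * E t (x j) := by
      intro j; rw [Set.indicator_of_mem (hxj j)]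
    rw [Finset.prod_congr rfl (fun j _ => this j), Finset.prod_mul_distrib,
      Finset.prod_ite_eq' Finset.univ i (fun j => (x j) ^ a), if_pos (Finset.mem_univ i)]
  · rw [Set.indicator_of_notMem hx]
    have : ∃ j, x j ∉ Set.Ioo (0:ℝ) 1 := by
      by_contra h
      push_neg at h
      exact hx (fun j _ => h j)
    obtain ⟨j, hj⟩ := this
    rw [eq_comm]
    refine Finset.prod_eq_zero (Finset.mem_univ j) ?_
    rw [Set.indicator_of_notMem hj]

lemma claimC (ht : 0 ≤ t) {a : ℝ} (ha : 0 ≤ a) (i : Fin n) :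
    ∫ x in cube n, (x i ^ a * ∏ j, E t (x j)) = psi a t * phi t ^ (n - 1) := by
  rw [← MeasureTheory.integral_indicator cube_measurableSet]
  rw [show ((cube n).indicator (fun x => x i ^ a * ∏ j, E t (x j)))
      = (fun x => ∏ j, (Set.Ioo (0:ℝ) 1).indicator
          (fun y => (if j = i then y ^ a else 1) * E t y) (x j)) from
    funext (indicator_prod_eq a t i)]
  rw [MeasureTheory.integral_fintype_prod_volume_eq_prod
    (f := fun j y => (Set.Ioo (0:ℝ) 1).indicator
      (fun y => (if j = i then y ^ a else 1) * E t y) y)]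
  have hval : ∀ j : Fin n,
      (∫ y, (Set.Ioo (0:ℝ) 1).indicator
        (fun y => (if j = i then y ^ a else 1) * E t y) y)
      = if j = i then psi a t else phi t := by
    intro j
    rw [MeasureTheory.integral_indicator measurableSet_Ioo]
    by_cases hj : j = i
    · subst hj
      simp [psi]
    · simp only [if_neg hj, one_mul, phi]
  rw [Finset.prod_congr rfl (fun j _ => hval j)]
  rw [← Finset.mul_prod_erase Finset.univ _ (Finset.mem_univ i), if_pos rfl]
  have : ∏ j ∈ Finset.univ.erase i, (if j = i then psi a t else phi t)
      = phi t ^ (n - 1) := by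
    rw [Finset.prod_congr rfl (fun j hj => if_neg (Finset.ne_of_mem_erase hj)),
      Finset.prod_const, Finset.card_erase_of_mem (Finset.mem_univ i)]
    simp
  rw [this]

lemma prodE_meas : Measurable (fun x : Fin n → ℝ => ∏ j, E t (x j)) := by
  apply Finset.measurable_prod
  intro j _
  exact (E_cont t).measurable.comp (measurable_pi_apply j)

lemma powsum_meas : Measurable (fun x : Fin n → ℝ => ∑ i, x i ^ a) := by
  apply Finset.measurable_sum
  intro i _
  exact (rpow_meas a).comp (measurable_pi_apply i)

lemma sinsum_meas : Measurable (fun x : Fin n → ℝ => ∑ i, Real.sin (Real.pi * x i)) := by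
  apply Finset.measurable_sum
  intro i _
  exact (Real.continuous_sin.comp (continuous_const.mul continuous_id)).measurable.comp
    (measurable_pi_apply i)

instance : IsFiniteMeasure (volume.restrict (cube n)) := by
  constructor
  rw [Measure.restrict_apply_univ, volume_cube]
  exact ENNReal.one_lt_top

lemma term_integrableOn (ht : 0 ≤ t) {a : ℝ} (ha : 0 ≤ a) (i : Fin n) :
    IntegrableOn (fun x : Fin n → ℝ => x i ^ a * ∏ j, E t (x j)) (cube n) := by
  constructor
  · exact (((rpow_meas a).comp (measurable_pi_apply i)).mul (prodE_meas t)).aestronglyMeasurable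
  · apply HasFiniteIntegral.of_bounded (C := 1)
    filter_upwards [ae_restrict_mem cube_measurableSet] with x hx
    have hxj : ∀ j, x j ∈ Set.Ioo (0:ℝ) 1 := fun j => hx j (Set.mem_univ j)
    rw [Real.norm_eq_abs, abs_mul]
    have h1 : |x i ^ a| ≤ 1 := by
      rw [abs_of_nonneg (Real.rpow_nonneg (hxj i).1.le a)]
      exact Real.rpow_le_one (hxj i).1.le (hxj i).2.le ha
    have h2 : |∏ j, E t (x j)| ≤ 1 := by
      rw [abs_of_nonneg (Finset.prod_nonneg (fun j _ => (E_pos t (x j)).le))]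
      exact Finset.prod_le_one (fun j _ => (E_pos t (x j)).le)
        (fun j _ => E_le_one ht (hxj j))
    nlinarith [abs_nonneg (x i ^ a), abs_nonneg (∏ j, E t (x j))]

lemma claimC_sum (ht : 0 ≤ t) {a : ℝ} (ha : 0 ≤ a) :
    ∫ x in cube n, ((∑ i, x i ^ a) * ∏ j, E t (x j))
      = (n : ℝ) * (psi a t * phi t ^ (n - 1)) := by
  have : (fun x : Fin n → ℝ => (∑ i, x i ^ a) * ∏ j, E t (x j))
      = (fun x : Fin n → ℝ => ∑ i, (x i ^ a * ∏ j, E t (x j))) := by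
    funext x; rw [Finset.sum_mul]
  rw [this, MeasureTheory.integral_finset_sum Finset.univ
    (fun i _ => term_integrableOn t ht ha i)]
  rw [Finset.sum_congr rfl (fun i _ => claimC t ht ha i)]
  rw [Finset.sum_const, Finset.card_univ, Fintype.card_fin, nsmul_eq_mul]

end ProductSpace


section Key

variable {a : ℝ}

lemma min_int : IntegrableOn (fun t : ℝ => min 1 (t ^ 2)⁻¹) (Set.Ioi (0:ℝ)) := by
  have h1 : IntegrableOn (fun t : ℝ => min 1 (t ^ 2)⁻¹) (Set.Ioc (0:ℝ) 1) := by
    refine Integrable.mono' (g := fun _ : ℝ => (1:ℝ))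
      (integrableOn_const (by simp)) ?_ ?_
    · refine AEStronglyMeasurable.mono_measure ?_ Measure.restrict_le_self
      exact ((measurable_const.min ((measurable_id.pow_const 2).inv)).aestronglyMeasurable)
    · filter_upwards with t
      rw [Real.norm_eq_abs, abs_of_nonneg (le_min zero_le_one (by positivity))]
      exact min_le_left _ _
  have h2 : IntegrableOn (fun t : ℝ => min 1 (t ^ 2)⁻¹) (Set.Ioi (1:ℝ)) := by
    have hint : IntegrableOn (fun t : ℝ => t ^ (-2:ℝ)) (Set.Ioi (1:ℝ)) :=
      integrableOn_Ioi_rpow_of_lt (by norm_num) one_pos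
    refine hint.mono' ?_ ?_
    · refine AEStronglyMeasurable.mono_measure ?_ Measure.restrict_le_self
      exact ((measurable_const.min ((measurable_id.pow_const 2).inv)).aestronglyMeasurable)
    · filter_upwards [ae_restrict_mem measurableSet_Ioi] with t ht
      have ht1 : (1:ℝ) ≤ t := le_of_lt ht
      rw [Real.norm_eq_abs, abs_of_nonneg (le_min zero_le_one (by positivity))]
      have : t ^ (-2:ℝ) = (t ^ 2)⁻¹ := by
        rw [Real.rpow_neg (by linarith), Real.rpow_two]
      rw [this]
      exact min_le_right _ _
  have := h1.union h2
  rwa [Set.Ioc_union_Ioi_eq_Ioi zero_le_one] at this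

lemma phi_pow_le_min {t : ℝ} (ht : 0 < t) {n : ℕ} (hn : 3 ≤ n) :
    phi t ^ (n - 1) ≤ min 1 (t ^ 2)⁻¹ := by
  rcases le_or_gt t 1 with h1 | h1
  · have : phi t ^ (n-1) ≤ 1 := by
      apply pow_le_one₀ (phi_nonneg t) (phi_le_one ht.le)
    have hmin : min 1 (t^2)⁻¹ = 1 := min_eq_left (by
      rw [le_inv_comm₀ one_pos (by positivity)]
      nlinarith)
    rw [hmin]; exact this
  · have hphi : phi t ≤ 1/t := phi_le_inv ht
    have hphi1 : phi t ≤ 1 := by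
      calc phi t ≤ 1/t := hphi
        _ ≤ 1 := by rw [div_le_one ht]; linarith
    have h2 : phi t ^ (n-1) ≤ phi t ^ 2 := by
      apply pow_le_pow_of_le_one (phi_nonneg t) hphi1
      omega
    have h3 : phi t ^ 2 ≤ (1/t) ^ 2 := by
      apply pow_le_pow_left₀ (phi_nonneg t) hphi
    have hmin : min 1 (t^2)⁻¹ = (t^2)⁻¹ := min_eq_right (by
      rw [inv_le_one_iff₀]
      right; nlinarith)
    rw [hmin]
    calc phi t ^ (n-1) ≤ (1/t)^2 := le_trans h2 h3
      _ = (t^2)⁻¹ := by rw [div_pow, one_pow, one_div]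
  
lemma J_integrable (ha : 0 ≤ a) {n : ℕ} (hn : 3 ≤ n) :
    IntegrableOn (fun t : ℝ => (n : ℝ) * (psi a t * phi t ^ (n - 1)))
      (Set.Ioi (0:ℝ)) := by
  refine (min_int.const_mul (n:ℝ)).mono' ?_ ?_
  · refine AEStronglyMeasurable.mono_measure ?_ Measure.restrict_le_self
    exact (((psi_measurable a).mul ((phi_measurable).pow_const (n-1))).const_mul
      (n:ℝ)).aestronglyMeasurable
  · filter_upwards [ae_restrict_mem measurableSet_Ioi] with t ht
    have ht0 : (0:ℝ) < t := ht
    have hpsi0 := psi_nonneg a t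
    have hpsi1 := psi_le_one ha ht0.le
    have hphip : 0 ≤ phi t ^ (n-1) := pow_nonneg (phi_nonneg t) _
    have hm := phi_pow_le_min ht0 hn
    rw [Real.norm_eq_abs, abs_of_nonneg (by positivity)]
    have : psi a t * phi t ^ (n-1) ≤ min 1 (t^2)⁻¹ := by
      nlinarith [le_min zero_le_one (by positivity : (0:ℝ) ≤ (t^2)⁻¹)]
    nlinarith [Nat.cast_nonneg (α := ℝ) n]

lemma key_formula (ha : 0 ≤ a) {n : ℕ} (hn : 3 ≤ n) :
    ∫ x : Fin n → ℝ in cube n, (∑ i, x i ^ a) / (∑ i, Real.sin (Real.pi * x i))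
      = ∫ t in Set.Ioi (0:ℝ), (n : ℝ) * (psi a t * phi t ^ (n - 1)) := by
  haveI : Nonempty (Fin n) := Fin.pos_iff_nonempty.mp (by omega)
  set A : (Fin n → ℝ) → ℝ := fun x => ∑ i, x i ^ a with hA
  set S : (Fin n → ℝ) → ℝ := fun x => ∑ i, Real.sin (Real.pi * x i) with hS
  set G : (Fin n → ℝ) → ℝ → ℝ := fun x t => A x * Real.exp (-(t * S x)) with hG
  set J : ℝ → ℝ := fun t => (n : ℝ) * (psi a t * phi t ^ (n - 1)) with hJ
  have hScube : ∀ x ∈ cube n, 0 < S x := by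
    intro x hx
    exact Finset.sum_pos (fun i _ => sin_pos (hx i (Set.mem_univ i))) Finset.univ_nonempty
  have hAcube : ∀ x ∈ cube n, 0 ≤ A x := by
    intro x hx
    exact Finset.sum_nonneg (fun i _ => Real.rpow_nonneg (hx i (Set.mem_univ i)).1.le a)
  have hAle : ∀ x ∈ cube n, A x ≤ n := by
    intro x hx
    calc A x ≤ ∑ _i : Fin n, (1:ℝ) := Finset.sum_le_sum (fun i _ =>
        Real.rpow_le_one (hx i (Set.mem_univ i)).1.le (hx i (Set.mem_univ i)).2.le ha)
      _ = n := by simp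
  have hexp_prod : ∀ (x : Fin n → ℝ) (t : ℝ),
      Real.exp (-(t * S x)) = ∏ j, E t (x j) := by
    intro x t
    rw [hS]
    simp only
    rw [Finset.mul_sum, ← Finset.sum_neg_distrib, Real.exp_sum]
    rfl
  have hf_meas : Measurable (fun x : Fin n → ℝ => A x / S x) :=
    (powsum_meas a).div (sinsum_meas)
  have hG_meas : Measurable (fun p : (Fin n → ℝ) × ℝ => G p.1 p.2) := by
    apply Measurable.mul
    · exact (powsum_meas a).comp measurable_fst
    · apply Real.measurable_exp.comp
      apply Measurable.neg
      exact measurable_snd.mul ((sinsum_meas).comp measurable_fst)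
  -- integrability of G(·,t) on cube for t ≥ 0
  have hintG : ∀ t : ℝ, 0 ≤ t → IntegrableOn (fun x => G x t) (cube n) := by
    intro t ht
    constructor
    · exact (hG_meas.comp (measurable_id.prodMk measurable_const)).aestronglyMeasurable
    · apply HasFiniteIntegral.of_bounded (C := (n:ℝ))
      filter_upwards [ae_restrict_mem cube_measurableSet] with x hx
      have h1 := hAcube x hx
      have h2 := hAle x hx
      have h3 : Real.exp (-(t * S x)) ≤ 1 := by
        rw [Real.exp_le_one_iff]
        have := (hScube x hx).le
        nlinarith
      rw [Real.norm_eq_abs, abs_of_nonneg (mul_nonneg h1 (Real.exp_pos _).le)]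
      nlinarith [Real.exp_pos (-(t * S x))]
  -- value of inner integral over cube
  have hGval : ∀ t : ℝ, 0 ≤ t → ∫ x in cube n, G x t = J t := by
    intro t ht
    have : (fun x : Fin n → ℝ => G x t)
        = (fun x : Fin n → ℝ => (∑ i, x i ^ a) * ∏ j, E t (x j)) := by
      funext x
      rw [hG]
      simp only
      rw [hexp_prod x t]
    rw [this, claimC_sum t ht ha]
  -- the pointwise (in x) identity
  have hx_eq : ∀ x ∈ cube n,
      ENNReal.ofReal (A x / S x) = ∫⁻ t in Set.Ioi (0:ℝ), ENNReal.ofReal (G x t) := by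
    intro x hx
    have hSx := hScube x hx
    have hAx := hAcube x hx
    have hint : IntegrableOn (fun t => G x t) (Set.Ioi (0:ℝ)) := by
      have : (fun t => G x t) = (fun t => A x * Real.exp (-(S x * t))) := by
        funext t; rw [hG]; simp only; ring_nf
      rw [this]
      exact (exp_mul_integrableOn hSx).const_mul (A x)
    have hval : ∫ t in Set.Ioi (0:ℝ), G x t = A x / S x := by
      have : (fun t => G x t) = (fun t => A x * Real.exp (-(S x * t))) := by
        funext t; rw [hG]; simp only; ring_nf
      rw [this, integral_const_mul, int_exp_Ioi hSx, mul_one_div]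
    rw [← hval]
    apply ofReal_integral_eq_lintegral_ofReal hint
    filter_upwards with t
    exact mul_nonneg hAx (Real.exp_pos _).le
  -- main chain
  have hnn : 0 ≤ᶠ[ae (volume.restrict (cube n))] (fun x => A x / S x) := by
    filter_upwards [ae_restrict_mem cube_measurableSet] with x hx
    exact div_nonneg (hAcube x hx) (hScube x hx).le
  rw [show (∫ x : Fin n → ℝ in cube n,
      (∑ i, x i ^ a) / (∑ i, Real.sin (Real.pi * x i)))
      = ∫ x in cube n, A x / S x from rfl]
  rw [integral_eq_lintegral_of_nonneg_ae hnn hf_meas.aestronglyMeasurable]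
  have step1 : ∫⁻ x in cube n, ENNReal.ofReal (A x / S x)
      = ∫⁻ x in cube n, ∫⁻ t in Set.Ioi (0:ℝ), ENNReal.ofReal (G x t) := by
    apply lintegral_congr_ae
    filter_upwards [ae_restrict_mem cube_measurableSet] with x hx
    exact hx_eq x hx
  have step2 : ∫⁻ x in cube n, ∫⁻ t in Set.Ioi (0:ℝ), ENNReal.ofReal (G x t)
      = ∫⁻ t in Set.Ioi (0:ℝ), ∫⁻ x in cube n, ENNReal.ofReal (G x t) := by
    apply lintegral_lintegral_swap
    exact (ENNReal.measurable_ofReal.comp hG_meas).aemeasurable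
  have step3 : ∫⁻ t in Set.Ioi (0:ℝ), ∫⁻ x in cube n, ENNReal.ofReal (G x t)
      = ∫⁻ t in Set.Ioi (0:ℝ), ENNReal.ofReal (J t) := by
    apply lintegral_congr_ae
    filter_upwards [ae_restrict_mem measurableSet_Ioi] with t ht
    have ht0 : (0:ℝ) ≤ t := (le_of_lt ht)
    rw [← hGval t ht0]
    rw [← ofReal_integral_eq_lintegral_ofReal (hintG t ht0)]
    filter_upwards [ae_restrict_mem cube_measurableSet] with x hx
    exact mul_nonneg (hAcube x hx) (Real.exp_pos _).le
  have step4 : ∫⁻ t in Set.Ioi (0:ℝ), ENNReal.ofReal (J t)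
      = ENNReal.ofReal (∫ t in Set.Ioi (0:ℝ), J t) := by
    rw [ofReal_integral_eq_lintegral_ofReal (J_integrable ha hn)]
    filter_upwards [ae_restrict_mem measurableSet_Ioi] with t ht
    have ht0 : (0:ℝ) ≤ t := le_of_lt ht
    have := psi_nonneg a t
    have := pow_nonneg (phi_nonneg t) (n-1)
    positivity
  rw [step1, step2, step3, step4, ENNReal.toReal_ofReal]
  apply setIntegral_nonneg measurableSet_Ioi
  intro t ht
  have := psi_nonneg a t
  have := pow_nonneg (phi_nonneg t) (n-1)
  positivity

end Key


section Limit

variable {a : ℝ}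

lemma subst_formula (a : ℝ) {n : ℕ} (hn : 1 ≤ n) :
    ∫ t in Set.Ioi (0:ℝ), (n : ℝ) * (psi a t * phi t ^ (n - 1))
      = ∫ s in Set.Ioi (0:ℝ), psi a ((n:ℝ)⁻¹ * s) * phi ((n:ℝ)⁻¹ * s) ^ (n - 1) := by
  have hnpos : (0:ℝ) < (n:ℝ) := by exact_mod_cast Nat.pos_of_ne_zero (by omega)
  have hinv : (0:ℝ) < (n:ℝ)⁻¹ := by positivity
  have h := MeasureTheory.integral_comp_mul_left_Ioi
    (g := fun t => psi a t * phi t ^ (n - 1)) 0 hinv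
  simp only [mul_zero, smul_eq_mul, inv_inv] at h
  rw [h, integral_const_mul]

lemma aux_tendsto_u (s : ℝ) :
    Tendsto (fun m : ℕ => ((m + 4 : ℕ) : ℝ)⁻¹ * s) atTop (nhds 0) := by
  have h1 : Tendsto (fun m : ℕ => ((m + 4 : ℕ) : ℝ)) atTop atTop := by
    apply tendsto_natCast_atTop_atTop.comp
    exact tendsto_add_atTop_nat 4
  have h2 := h1.inv_tendsto_atTop
  simpa using h2.mul_const s

lemma aux_tendsto_ratio :
    Tendsto (fun m : ℕ => ((m + 3 : ℕ) : ℝ) / ((m + 4 : ℕ) : ℝ)) atTop (nhds 1) := by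
  have he : ∀ m : ℕ, ((m+3:ℕ):ℝ) / ((m+4:ℕ):ℝ) = 1 - ((m+4:ℕ):ℝ)⁻¹ := by
    intro m
    have h4 : ((m+4:ℕ):ℝ) ≠ 0 := by push_cast; positivity
    field_simp
    push_cast; ring
  simp only [he]
  have h1 : Tendsto (fun m : ℕ => ((m + 4 : ℕ) : ℝ)) atTop atTop := by
    apply tendsto_natCast_atTop_atTop.comp
    exact tendsto_add_atTop_nat 4
  have := tendsto_const_nhds (x := (1:ℝ)) (f := atTop (α := ℕ)) |>.sub h1.inv_tendsto_atTop
  simpa using this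

lemma pointwise_psi (ha : 0 ≤ a) (s : ℝ) (hs : 0 < s) :
    Tendsto (fun m : ℕ => psi a (((m + 4 : ℕ) : ℝ)⁻¹ * s)) atTop (nhds (1 / (a + 1))) := by
  have hu : ∀ m : ℕ, 0 ≤ ((m + 4 : ℕ) : ℝ)⁻¹ * s := by
    intro m; positivity
  apply tendsto_of_tendsto_of_tendsto_of_le_of_le
    (g := fun m : ℕ => 1 / (a + 1) - ((m + 4 : ℕ) : ℝ)⁻¹ * s)
    (h := fun _ : ℕ => 1 / (a + 1))
  · simpa using (tendsto_const_nhds (x := 1/(a+1)) (f := atTop (α := ℕ))).sub (aux_tendsto_u s)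
  · exact tendsto_const_nhds
  · exact fun m => psi_ge ha (hu m)
  · exact fun m => psi_le_recip ha (hu m)

lemma pointwise_phi_tendsto_one (s : ℝ) (hs : 0 < s) :
    Tendsto (fun m : ℕ => phi (((m + 4 : ℕ) : ℝ)⁻¹ * s)) atTop (nhds 1) := by
  have hu : ∀ m : ℕ, 0 ≤ ((m + 4 : ℕ) : ℝ)⁻¹ * s := by intro m; positivity
  apply tendsto_of_tendsto_of_tendsto_of_le_of_le
    (g := fun m : ℕ => 1 - 2 / Real.pi * (((m + 4 : ℕ) : ℝ)⁻¹ * s))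
    (h := fun _ : ℕ => (1:ℝ))
  · have := ((aux_tendsto_u s).const_mul (2 / Real.pi))
    simpa using (tendsto_const_nhds (x := (1:ℝ)) (f := atTop (α := ℕ))).sub this
  · exact tendsto_const_nhds
  · exact fun m => phi_ge (hu m)
  · exact fun m => phi_le_one (hu m)

lemma pointwise_philog (s : ℝ) (hs : 0 < s) :
    Tendsto (fun m : ℕ => ((m + 3 : ℕ) : ℝ) * (phi (((m + 4 : ℕ) : ℝ)⁻¹ * s) - 1))
      atTop (nhds (-(2 / Real.pi * s))) := by
  set u : ℕ → ℝ := fun m => ((m + 4 : ℕ) : ℝ)⁻¹ * s with hu_def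
  have hu0 : ∀ m, 0 < u m := by
    intro m
    have : (0:ℝ) < ((m + 4 : ℕ) : ℝ) := by push_cast; positivity
    exact mul_pos (by positivity) hs
  -- eventual bounds
  have hev : ∀ᶠ m : ℕ in atTop, u m ≤ 1 := by
    have := aux_tendsto_u s
    have := this.eventually (eventually_le_nhds (by norm_num : (0:ℝ) < 1/2))
    filter_upwards [this] with m hm
    calc u m ≤ 1/2 := hm
      _ ≤ 1 := by norm_num
  -- lower bound sequence
  have hlow : ∀ m : ℕ, -(2/Real.pi * s) * (((m+3:ℕ):ℝ) / ((m+4:ℕ):ℝ))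
      ≤ ((m + 3 : ℕ) : ℝ) * (phi (u m) - 1) := by
    intro m
    have h := phi_ge (hu0 m).le
    have hm3 : (0:ℝ) ≤ ((m+3:ℕ):ℝ) := by positivity
    have h4 : ((m+4:ℕ):ℝ) ≠ 0 := by push_cast; positivity
    have heq : -(2/Real.pi * s) * (((m+3:ℕ):ℝ) / ((m+4:ℕ):ℝ))
        = ((m+3:ℕ):ℝ) * (-(2/Real.pi) * u m) := by
      rw [hu_def]
      field_simp
    rw [heq]
    have : -(2/Real.pi) * u m ≤ phi (u m) - 1 := by linarith
    exact mul_le_mul_of_nonneg_left this hm3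
  -- upper bound sequence
  have hupp : ∀ᶠ m : ℕ in atTop, ((m + 3 : ℕ) : ℝ) * (phi (u m) - 1)
      ≤ -(2/Real.pi * s) * (((m+3:ℕ):ℝ) / ((m+4:ℕ):ℝ)) + ((m+3:ℕ):ℝ) * (u m)^2 := by
    filter_upwards [hev] with m hm
    have h := phi_le_quad (hu0 m).le hm
    have hm3 : (0:ℝ) ≤ ((m+3:ℕ):ℝ) := by positivity
    have h4 : ((m+4:ℕ):ℝ) ≠ 0 := by push_cast; positivity
    have heq : -(2/Real.pi * s) * (((m+3:ℕ):ℝ) / ((m+4:ℕ):ℝ))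
        = ((m+3:ℕ):ℝ) * (-(2/Real.pi) * u m) := by
      rw [hu_def]; field_simp
    rw [heq]
    have : phi (u m) - 1 ≤ -(2/Real.pi) * u m + (u m)^2 := by linarith
    nlinarith [mul_le_mul_of_nonneg_left this hm3]
  -- limits of bounds
  have hlim_low : Tendsto (fun m : ℕ => -(2/Real.pi * s) * (((m+3:ℕ):ℝ) / ((m+4:ℕ):ℝ)))
      atTop (nhds (-(2/Real.pi * s))) := by
    have := aux_tendsto_ratio.const_mul (-(2/Real.pi * s))
    simpa using this
  have hsq : Tendsto (fun m : ℕ => ((m+3:ℕ):ℝ) * (u m)^2) atTop (nhds 0) := by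
    have heq : ∀ m : ℕ, ((m+3:ℕ):ℝ) * (u m)^2
        = (((m+3:ℕ):ℝ) / ((m+4:ℕ):ℝ)) * (u m * s) := by
      intro m
      have h4 : ((m+4:ℕ):ℝ) ≠ 0 := by push_cast; positivity
      rw [hu_def]
      field_simp
    have h0 : Tendsto (fun m : ℕ => u m * s) atTop (nhds 0) := by
      have := (aux_tendsto_u s).mul_const s
      rwa [zero_mul] at this
    have h := aux_tendsto_ratio.mul h0
    rw [mul_zero] at h
    exact h.congr (fun m => (heq m).symm)
  have hlim_upp : Tendsto (fun m : ℕ =>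
      -(2/Real.pi * s) * (((m+3:ℕ):ℝ) / ((m+4:ℕ):ℝ)) + ((m+3:ℕ):ℝ) * (u m)^2)
      atTop (nhds (-(2/Real.pi * s))) := by
    simpa using hlim_low.add hsq
  exact tendsto_of_tendsto_of_tendsto_of_le_of_le' hlim_low hlim_upp
    (Eventually.of_forall hlow) hupp

lemma pointwise_phipow (s : ℝ) (hs : 0 < s) :
    Tendsto (fun m : ℕ => phi (((m + 4 : ℕ) : ℝ)⁻¹ * s) ^ (m + 3)) atTop
      (nhds (Real.exp (-(2 / Real.pi * s)))) := by
  set u : ℕ → ℝ := fun m => ((m + 4 : ℕ) : ℝ)⁻¹ * s with hu_def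
  have hu0 : ∀ m, 0 < u m := by
    intro m
    have : (0:ℝ) < ((m + 4 : ℕ) : ℝ) := by push_cast; positivity
    exact mul_pos (by positivity) hs
  have hev1 : ∀ᶠ m : ℕ in atTop, u m ≤ 1 := by
    have := (aux_tendsto_u s).eventually (eventually_le_nhds (by norm_num : (0:ℝ) < 1/2))
    filter_upwards [this] with m hm
    have hm' : u m ≤ 1/2 := hm
    linarith
  have hev_pos : ∀ᶠ m : ℕ in atTop, 0 < phi (u m) := by
    have := (aux_tendsto_u s).eventually (eventually_le_nhds (by norm_num : (0:ℝ) < 1/2))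
    filter_upwards [this] with m hm
    have hm' : u m ≤ 1/2 := hm
    have := phi_ge (hu0 m).le
    have h2pi : 2 / Real.pi ≤ 1 := by
      rw [div_le_one Real.pi_pos]; exact Real.two_le_pi
    nlinarith [hu0 m]
  have hev_lt1 : ∀ᶠ m : ℕ in atTop, phi (u m) < 1 := by
    filter_upwards [hev1] with m hm
    have := phi_le_lin (hu0 m).le hm
    linarith [hu0 m]
  -- log slope
  have hslope : Tendsto (fun y : ℝ => Real.log y / (y - 1)) (nhdsWithin 1 {(1:ℝ)}ᶜ)
      (nhds 1) := by
    have h := hasDerivAt_iff_tendsto_slope.mp (Real.hasDerivAt_log (one_ne_zero))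
    rw [inv_one] at h
    apply h.congr
    intro y
    rw [slope_def_field, Real.log_one]
    rw [show Real.log y - 0 = Real.log y by ring]
  have hphi1 : Tendsto (fun m : ℕ => phi (u m)) atTop (nhds 1) :=
    pointwise_phi_tendsto_one s hs
  have hQ : Tendsto (fun m : ℕ => Real.log (phi (u m)) / (phi (u m) - 1)) atTop (nhds 1) := by
    apply hslope.comp
    rw [tendsto_nhdsWithin_iff]
    exact ⟨hphi1, by filter_upwards [hev_lt1] with m hm using ne_of_lt hm⟩
  have hB := pointwise_philog s hs
  have hlog : Tendsto (fun m : ℕ => ((m + 3 : ℕ) : ℝ) * Real.log (phi (u m))) atTop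
      (nhds (-(2 / Real.pi * s))) := by
    have hprod := hB.mul hQ
    rw [mul_one] at hprod
    apply hprod.congr'
    filter_upwards [hev_lt1] with m hm
    have hne : phi (u m) - 1 ≠ 0 := sub_ne_zero.mpr (ne_of_lt hm)
    rw [mul_assoc, mul_comm (phi (u m) - 1), div_mul_cancel₀ _ hne]
  have hexp := (Real.continuous_exp.tendsto _).comp hlog
  apply hexp.congr'
  filter_upwards [hev_pos] with m hm
  simp only [Function.comp_apply]
  rw [← Real.log_pow, Real.exp_log (pow_pos hm _)]

end Limit


section DCT

variable {a : ℝ}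

lemma K_exists : ∃ K : ℝ, 0 ≤ K ∧ ∀ k : ℕ, (k:ℝ)^2 * (3/4:ℝ)^k ≤ K := by
  obtain ⟨K, hK⟩ := (tendsto_pow_const_mul_const_pow_of_lt_one 2
    (by norm_num : (0:ℝ) ≤ 3/4) (by norm_num : (3/4:ℝ) < 1)).bddAbove_range
  refine ⟨max K 0, le_max_right _ _, fun k => ?_⟩
  exact le_trans (hK (Set.mem_range_self k)) (le_max_left _ _)

lemma phipow_le {K : ℝ} (hK : ∀ k : ℕ, (k:ℝ)^2 * (3/4:ℝ)^k ≤ K)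
    {s : ℝ} (hs : 0 < s) (m : ℕ) :
    phi (((m+4:ℕ):ℝ)⁻¹ * s) ^ (m+3)
      ≤ Real.exp (-(8⁻¹ * s)) + (64/27 * K) * min 1 (s^2)⁻¹ := by
  set N : ℝ := ((m+4:ℕ):ℝ) with hN_def
  have hN : (4:ℝ) ≤ N := by rw [hN_def]; push_cast; linarith [Nat.cast_nonneg (α := ℝ) m]
  have hN0 : (0:ℝ) < N := by linarith
  set u : ℝ := N⁻¹ * s with hu_def
  have hu0 : 0 < u := by positivity
  have hK0 : 0 ≤ K := le_trans (by norm_num) (hK 0)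
  have hmin0 : 0 ≤ min 1 (s^2)⁻¹ := le_min zero_le_one (by positivity)
  rcases le_or_gt s N with hsN | hsN
  · -- small s case
    have hu1 : u ≤ 1 := by
      rw [hu_def]
      calc N⁻¹ * s ≤ N⁻¹ * N := mul_le_mul_of_nonneg_left hsN (by positivity)
        _ = 1 := inv_mul_cancel₀ hN0.ne'
    have h1 : phi u ≤ 1 - u/4 := by
      have := phi_le_lin hu0.le hu1
      linarith
    have h2 : 1 - u/4 ≤ Real.exp (-(u/4)) := by
      have := Real.add_one_le_exp (-(u/4)); linarith
    have h3 : phi u ^ (m+3) ≤ Real.exp (-(u/4)) ^ (m+3) :=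
      pow_le_pow_left₀ (phi_nonneg u) (h1.trans h2) _
    have h4 : Real.exp (-(u/4)) ^ (m+3) = Real.exp (((m+3:ℕ):ℝ) * (-(u/4))) := by
      rw [Real.exp_nat_mul]
    have hNi : N⁻¹ ≤ 4⁻¹ := by
      apply inv_anti₀ (by norm_num) hN
    have h5 : ((m+3:ℕ):ℝ) * (-(u/4)) ≤ -(8⁻¹ * s) := by
      have hm3 : ((m+3:ℕ):ℝ) = N - 1 := by rw [hN_def]; push_cast; ring
      rw [hm3, hu_def]
      have key : (N-1) * -(N⁻¹ * s/4) = -(s/4) + (N⁻¹*s)/4 := by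
        field_simp
        ring
      rw [key]
      have := mul_le_mul_of_nonneg_right hNi hs.le
      nlinarith
    calc phi u ^ (m+3) ≤ Real.exp (((m+3:ℕ):ℝ) * (-(u/4))) := by rw [← h4]; exact h3
      _ ≤ Real.exp (-(8⁻¹ * s)) := Real.exp_le_exp.mpr h5
      _ ≤ _ := le_add_of_nonneg_right (mul_nonneg (by positivity) hmin0)
  · -- large s case
    have hu1 : 1 < u := by
      rw [hu_def]
      calc (1:ℝ) = N⁻¹ * N := (inv_mul_cancel₀ hN0.ne').symm
        _ < N⁻¹ * s := by
            apply mul_lt_mul_of_pos_left hsN (by positivity)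
    have hA : phi u ≤ 3/4 := by
      have h1 : phi u ≤ phi 1 := phi_anti zero_le_one hu1.le
      have h2 : phi 1 ≤ 3/4 := by
        have := phi_le_lin zero_le_one le_rfl; linarith
      linarith
    have hB : phi u ≤ N / s := by
      have h1 := phi_le_inv hu0
      have h2 : 1 / u = N / s := by
        rw [hu_def]
        rw [one_div, mul_inv, inv_inv]
        rw [div_eq_mul_inv]
      rw [← h2]; exact h1
    have hsplit : phi u ^ (m+3) = phi u ^ 2 * phi u ^ (m+1) := by
      rw [← pow_add]
      congr 1
      omega
    have hb1 : phi u ^ 2 ≤ (N/s)^2 := pow_le_pow_left₀ (phi_nonneg u) hB 2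
    have hb2 : phi u ^ (m+1) ≤ (3/4:ℝ)^(m+1) := pow_le_pow_left₀ (phi_nonneg u) hA _
    have hprod : phi u ^ (m+3) ≤ (N/s)^2 * (3/4:ℝ)^(m+1) := by
      rw [hsplit]
      exact mul_le_mul hb1 hb2 (pow_nonneg (phi_nonneg u) _) (by positivity)
    have hKbound : N^2 * (3/4:ℝ)^(m+1) ≤ 64/27 * K := by
      have hk := hK (m+4)
      have h3 : ((3:ℝ)/4)^3 = 27/64 := by norm_num
      calc N^2*(3/4:ℝ)^(m+1) = 64/27 * (N^2 * ((3/4:ℝ)^(m+1) * (27/64))) := by ring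
        _ = 64/27 * (N^2 * (3/4:ℝ)^(m+4)) := by
            rw [← h3, ← pow_add]
        _ ≤ 64/27 * K := by
            have hNk : N^2 * (3/4:ℝ)^(m+4) ≤ K := hk
            linarith
    have hmin : min 1 (s^2)⁻¹ = (s^2)⁻¹ := min_eq_right (by
      rw [inv_le_one_iff₀]
      right; nlinarith)
    have hfin : (N/s)^2 * (3/4:ℝ)^(m+1) ≤ (64/27 * K) * (s^2)⁻¹ := by
      have hse : (N/s)^2 * (3/4:ℝ)^(m+1) = (N^2 * (3/4:ℝ)^(m+1)) * (s^2)⁻¹ := by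
        rw [div_pow]
        ring
      rw [hse]
      apply mul_le_mul_of_nonneg_right hKbound (by positivity)
    calc phi u ^ (m+3) ≤ (N/s)^2 * (3/4:ℝ)^(m+1) := hprod
      _ ≤ (64/27 * K) * (s^2)⁻¹ := hfin
      _ = (64/27 * K) * min 1 (s^2)⁻¹ := by rw [hmin]
      _ ≤ _ := le_add_of_nonneg_left (Real.exp_pos _).le

lemma tendsto_shifted (ha : 0 ≤ a) :
    Tendsto (fun m : ℕ => ∫ s in Set.Ioi (0:ℝ),
        psi a (((m+4:ℕ):ℝ)⁻¹ * s) * phi (((m+4:ℕ):ℝ)⁻¹ * s) ^ (m+3)) atTop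
      (nhds (Real.pi / (2 * (a + 1)))) := by
  obtain ⟨K, hK0, hK⟩ := K_exists
  have ha1 : (0:ℝ) < a + 1 := by linarith
  have hlimit_val : ∫ s in Set.Ioi (0:ℝ), (1/(a+1)) * Real.exp (-(2/Real.pi * s))
      = Real.pi / (2 * (a + 1)) := by
    rw [integral_const_mul, int_exp_Ioi (by positivity : (0:ℝ) < 2/Real.pi)]
    rw [eq_div_iff (by positivity)]
    field_simp
  rw [← hlimit_val]
  apply MeasureTheory.tendsto_integral_of_dominated_convergence
    (bound := fun s => Real.exp (-(8⁻¹ * s)) + (64/27 * K) * min 1 (s^2)⁻¹)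
  · intro m
    apply Measurable.aestronglyMeasurable
    apply Measurable.mul
    · exact (psi_measurable a).comp (measurable_id.const_mul _)
    · exact ((phi_measurable).comp (measurable_id.const_mul _)).pow_const _
  · exact (exp_mul_integrableOn (by norm_num)).add (min_int.const_mul _)
  · intro m
    filter_upwards [ae_restrict_mem measurableSet_Ioi] with s hsmem
    have hs : (0:ℝ) < s := hsmem
    have hu0 : (0:ℝ) ≤ ((m+4:ℕ):ℝ)⁻¹ * s := by positivity
    have h1 := psi_nonneg a (((m+4:ℕ):ℝ)⁻¹ * s)
    have h2 := psi_le_one ha hu0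
    have h3 : (0:ℝ) ≤ phi (((m+4:ℕ):ℝ)⁻¹ * s) ^ (m+3) := pow_nonneg (phi_nonneg _) _
    have h4 := phipow_le hK hs m
    rw [Real.norm_eq_abs, abs_of_nonneg (mul_nonneg h1 h3)]
    nlinarith
  · filter_upwards [ae_restrict_mem measurableSet_Ioi] with s hsmem
    have hs : (0:ℝ) < s := hsmem
    have := (pointwise_psi ha s hs).mul (pointwise_phipow s hs)
    exact this

end DCT

end PowSin

/-- For a real `a ≥ 0`, the integrals
`I_n(a) = ∫_{(0,1)^n} (∑ xᵢ^a)/(∑ sin(π xᵢ)) dx` converge to `π/(2(a+1))` as `n → ∞`. -/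
theorem tendsto_integral_powerSum_sin_ratio (a : ℝ) (ha : 0 ≤ a) :
    Tendsto
      (fun n : ℕ =>
        ∫ x : Fin n → ℝ in Set.univ.pi (fun _ => Set.Ioo (0:ℝ) 1),
          (∑ i, x i ^ a) / (∑ i, Real.sin (Real.pi * x i)))
      atTop (nhds (Real.pi / (2 * (a + 1)))) := by
  rw [← tendsto_add_atTop_iff_nat 4]
  have heq : ∀ m : ℕ,
      (∫ x : Fin (m+4) → ℝ in Set.univ.pi (fun _ => Set.Ioo (0:ℝ) 1),
        (∑ i, x i ^ a) / (∑ i, Real.sin (Real.pi * x i)))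
      = ∫ s in Set.Ioi (0:ℝ),
          PowSin.psi a (((m+4:ℕ):ℝ)⁻¹ * s) * PowSin.phi (((m+4:ℕ):ℝ)⁻¹ * s) ^ (m+3) := by
    intro m
    have h1 := PowSin.key_formula (a := a) ha (n := m+4) (by omega)
    have h2 := PowSin.subst_formula a (n := m+4) (by omega)
    have h3 : (m+4) - 1 = m + 3 := by omega
    rw [h3] at h1 h2
    exact h1.trans h2
  apply Tendsto.congr (fun m => (heq m).symm)
  exact PowSin.tendsto_shifted ha
end
end

section
/- Let μ be a probability measure on a measurable space Ω, and let f, g : Ω → ℝ be measurable functions with f, g integrable with respect to μ, g > 0 μ-almost everywhere, ∫ g dμ ≠ 0, and the ratio f/g bounded on Ω (i.e. there is C with |f(x)| ≤ C·g(x) for all x). Let (X_i)_{i≥1} be an i.i.d. sequence of Ω-valued random variables with common law μ, and define L_n = E[(Σ_{i=1}^n f(X_i))/(Σ_{i=1}^n g(X_i))]. Then lim_{n→∞} L_n = (∫ f dμ)/(∫ g dμ). -/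
open MeasureTheory Filter ProbabilityTheory

/-- Let `μ` be a probability measure on `Ω`, `f g : Ω → ℝ` integrable with `g > 0`
`μ`-a.e., `∫ g dμ ≠ 0`, and `|f| ≤ C·g` pointwise. If `(X i)` is an i.i.d. sequence
of `Ω`-valued random variables with common law `μ`, then
`E[(∑ f(Xᵢ))/(∑ g(Xᵢ))] → (∫ f dμ)/(∫ g dμ)` as `n → ∞`. -/
theorem tendsto_expectation_ratio
    {Ω : Type*} [MeasurableSpace Ω] (μ : Measure Ω) [IsProbabilityMeasure μ]
    (f g : Ω → ℝ) (hf : Integrable f μ) (hg : Integrable g μ)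
    (hgpos : ∀ᵐ x ∂μ, 0 < g x) (hgint : ∫ x, g x ∂μ ≠ 0)
    (C : ℝ) (hbound : ∀ x, |f x| ≤ C * g x)
    {Ω' : Type*} [MeasurableSpace Ω'] (P : Measure Ω') [IsProbabilityMeasure P]
    (X : ℕ → Ω' → Ω) (hmeas : ∀ i, Measurable (X i))
    (hindep : iIndepFun X P)
    (hlaw : ∀ i, Measure.map (X i) P = μ) :
    Tendsto
      (fun n : ℕ =>
        ∫ ω, (∑ i ∈ Finset.range n, f (X i ω)) / (∑ i ∈ Finset.range n, g (X i ω)) ∂P)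
      atTop (nhds ((∫ x, f x ∂μ) / (∫ x, g x ∂μ))) := by
  classical
  -- C is nonnegative
  have hμne : (μ : Measure Ω) ≠ 0 := IsProbabilityMeasure.ne_zero μ
  have : (ae μ).NeBot := ae_neBot.2 hμne
  obtain ⟨x₀, hx₀⟩ := hgpos.exists
  have hC : 0 ≤ C := by
    nlinarith [hbound x₀, abs_nonneg (f x₀)]
  -- measurable modifications
  set f' := hf.1.mk f with hf'def
  set g' := hg.1.mk g with hg'def
  have hf'm : StronglyMeasurable f' := hf.1.stronglyMeasurable_mk
  have hg'm : StronglyMeasurable g' := hg.1.stronglyMeasurable_mk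
  have hff' : f =ᵐ[μ] f' := hf.1.ae_eq_mk
  have hgg' : g =ᵐ[μ] g' := hg.1.ae_eq_mk
  have hf' : Integrable f' μ := hf.congr hff'
  have hg' : Integrable g' μ := hg.congr hgg'
  have hgpos' : ∀ᵐ x ∂μ, 0 < g' x := by
    filter_upwards [hgpos, hgg'] with x h1 h2; rwa [← h2]
  have hbound' : ∀ᵐ x ∂μ, |f' x| ≤ C * g' x := by
    filter_upwards [hff', hgg'] with x h1 h2; rw [← h1, ← h2]; exact hbound x
  have hIf : ∫ x, f' x ∂μ = ∫ x, f x ∂μ := integral_congr_ae hff'.symm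
  have hIg : ∫ x, g' x ∂μ = ∫ x, g x ∂μ := integral_congr_ae hgg'.symm
  -- transfer a.e. facts along X i
  have hcomp_ae : ∀ (p : Ω → Prop), (∀ᵐ x ∂μ, p x) → ∀ᵐ ω ∂P, ∀ i, p (X i ω) := by
    intro p hp
    rw [ae_all_iff]
    intro i
    have : ∀ᵐ x ∂(Measure.map (X i) P), p x := by rw [hlaw i]; exact hp
    exact ae_of_ae_map (hmeas i).aemeasurable this
  -- identical distribution and independence for f' ∘ X, g' ∘ X
  have hident : ∀ i, IdentDistrib (X i) (X 0) P P := fun i =>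
    ⟨(hmeas i).aemeasurable, (hmeas 0).aemeasurable, by rw [hlaw i, hlaw 0]⟩
  have hintF : Integrable (fun ω => f' (X 0 ω)) P := by
    rw [← hlaw 0] at hf'
    exact hf'.comp_measurable (hmeas 0)
  have hintG : Integrable (fun ω => g' (X 0 ω)) P := by
    rw [← hlaw 0] at hg'
    exact hg'.comp_measurable (hmeas 0)
  have hEF : ∫ ω, f' (X 0 ω) ∂P = ∫ x, f x ∂μ := by
    rw [← hIf, ← hlaw 0, integral_map (hmeas 0).aemeasurable hf'm.aestronglyMeasurable]
  have hEG : ∫ ω, g' (X 0 ω) ∂P = ∫ x, g x ∂μ := by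
    rw [← hIg, ← hlaw 0, integral_map (hmeas 0).aemeasurable hg'm.aestronglyMeasurable]
  have sllnF := strong_law_ae_real (fun i ω => f' (X i ω)) hintF
    (fun i j hij => (hindep.indepFun hij).comp hf'm.measurable hf'm.measurable)
    (fun i => (hident i).comp hf'm.measurable)
  have sllnG := strong_law_ae_real (fun i ω => g' (X i ω)) hintG
    (fun i j hij => (hindep.indepFun hij).comp hg'm.measurable hg'm.measurable)
    (fun i => (hident i).comp hg'm.measurable)
  -- the integrand with f', g' equals the original one P-a.e. for each n
  have hcongr : ∀ n : ℕ,
      ∫ ω, (∑ i ∈ Finset.range n, f (X i ω)) / (∑ i ∈ Finset.range n, g (X i ω)) ∂P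
      = ∫ ω, (∑ i ∈ Finset.range n, f' (X i ω)) / (∑ i ∈ Finset.range n, g' (X i ω)) ∂P := by
    intro n
    apply integral_congr_ae
    filter_upwards [hcomp_ae _ hff', hcomp_ae _ hgg'] with ω h1 h2
    simp only [Finset.sum_congr rfl fun i _ => h1 i, Finset.sum_congr rfl fun i _ => h2 i]
  simp only [hcongr]
  -- dominated convergence
  have hconst : (∫ x, f x ∂μ) / (∫ x, g x ∂μ)
      = ∫ _ω, ((∫ x, f x ∂μ) / (∫ x, g x ∂μ)) ∂P := by
    simp
  rw [hconst]
  apply tendsto_integral_of_dominated_convergence (fun _ => C)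
  · intro n
    apply Measurable.aestronglyMeasurable
    exact (Finset.measurable_sum _ fun i _ => hf'm.measurable.comp (hmeas i)).div
      (Finset.measurable_sum _ fun i _ => hg'm.measurable.comp (hmeas i))
  · exact integrable_const C
  · intro n
    filter_upwards [hcomp_ae _ hgpos', hcomp_ae _ hbound'] with ω hpos hb
    rcases Nat.eq_zero_or_pos n with hn | hn
    · simp [hn, hC]
    · have hSg : 0 < ∑ i ∈ Finset.range n, g' (X i ω) :=
        Finset.sum_pos (fun i _ => hpos i) (by simpa using hn.ne')
      rw [Real.norm_eq_abs, abs_div, abs_of_pos hSg, div_le_iff₀ hSg]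
      calc |∑ i ∈ Finset.range n, f' (X i ω)|
          ≤ ∑ i ∈ Finset.range n, |f' (X i ω)| := Finset.abs_sum_le_sum_abs _ _
        _ ≤ ∑ i ∈ Finset.range n, C * g' (X i ω) := Finset.sum_le_sum fun i _ => hb i
        _ = C * ∑ i ∈ Finset.range n, g' (X i ω) := by rw [Finset.mul_sum]
  · filter_upwards [sllnF, sllnG] with ω hF hG
    rw [hEF] at hF
    rw [hEG] at hG
    have : Tendsto (fun n : ℕ =>
        ((∑ i ∈ Finset.range n, f' (X i ω)) / n) / ((∑ i ∈ Finset.range n, g' (X i ω)) / n))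
        atTop (nhds ((∫ x, f x ∂μ) / (∫ x, g x ∂μ))) := hF.div hG hgint
    apply this.congr'
    filter_upwards [eventually_ge_atTop 1] with n hn
    have hn' : (n : ℝ) ≠ 0 := by positivity
    field_simp
end

section
/- Let A ∈ M_n(ℂ) and define the matrix sequence A_0 = A and, for all k ≥ 0, A_{k+1} = A·(A_k - (Tr(A_k)/(k+1))·I_n). Then the characteristic polynomial of A satisfies det(X·I - A) = X^n - Σ_{k=1}^{n} (Tr(A_{k-1})/k) · X^{n-k}; equivalently, det(A - X·I) = (-1)^n (X^n - Σ_{k=1}^{n} (Tr(A_{k-1})/k) X^{n-k}). -/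
open Matrix Polynomial

/-- The Le Verrier–Souriau–Faddeev matrix sequence: `A₀ = A` and
`A_{k+1} = A·(A_k - (Tr(A_k)/(k+1))·I)`. -/
noncomputable def lvsfSeq {n : ℕ} (A : Matrix (Fin n) (Fin n) ℂ) :
    ℕ → Matrix (Fin n) (Fin n) ℂ
  | 0 => A
  | k + 1 => A * (lvsfSeq A k - (((lvsfSeq A k).trace / (k + 1)) • (1 : Matrix (Fin n) (Fin n) ℂ)))

section Aux
open Finset
variable {R : Type*} [CommRing R] {m : Type*} [Fintype m] [DecidableEq m]

lemma det_updateColumn_eq (M : Matrix m m R[X]) (j : m) (d : m → R[X]) :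
    (M.updateCol j d).det
      = ∑ σ : Equiv.Perm m, Equiv.Perm.sign σ • (d (σ j) * ∏ i ∈ univ.erase j, M (σ i) i) := by
  rw [det_apply]
  refine Finset.sum_congr rfl fun σ _ => ?_
  congr 1
  rw [← Finset.mul_prod_erase (univ : Finset m) _ (mem_univ j)]
  rw [updateCol_apply, if_pos rfl]
  congr 1
  refine Finset.prod_congr rfl fun i hi => ?_
  rw [updateCol_apply, if_neg (Finset.mem_erase.mp hi).1]

lemma derivative_det (M : Matrix m m R[X]) :
    derivative M.det = ∑ j, (M.updateCol j fun i => derivative (M i j)).det := by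
  conv_lhs => rw [det_apply]
  rw [map_sum]
  have h : ∀ σ : Equiv.Perm m,
      derivative (Equiv.Perm.sign σ • ∏ i, M (σ i) i)
        = ∑ j, Equiv.Perm.sign σ •
            ((derivative (M (σ j) j)) * ∏ i ∈ univ.erase j, M (σ i) i) := by
    intro σ
    rw [Units.smul_def, map_zsmul]
    rw [Finset.smul_sum.symm]
    congr 1
    rw [Finset.prod_eq_multiset_prod, derivative_prod, Finset.sum]
    refine congr_arg Multiset.sum ?_
    refine Multiset.map_congr rfl fun j _ => ?_
    rw [mul_comm, Finset.prod_eq_multiset_prod]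
    rfl
  rw [Finset.sum_congr rfl fun σ _ => h σ, Finset.sum_comm]
  refine Finset.sum_congr rfl fun j _ => ?_
  rw [det_updateColumn_eq]

lemma derivative_charmatrix_col (A : Matrix m m R) (j : m) :
    (fun i => derivative (charmatrix A i j)) = Pi.single j 1 := by
  funext i
  by_cases h : i = j
  · subst h
    simp [charmatrix_apply_eq]
  · simp [charmatrix_apply_ne _ _ _ h, Pi.single_eq_of_ne h]

lemma charmatrix_transpose' (A : Matrix m m R) : charmatrix Aᵀ = (charmatrix A)ᵀ := by
  ext i j
  by_cases h : i = j
  · subst h; simp [charmatrix_apply_eq]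
  · simp [charmatrix_apply_ne _ _ _ h, charmatrix_apply_ne _ _ _ (Ne.symm h)]

lemma derivative_charpoly (A : Matrix m m R) :
    derivative A.charpoly = (adjugate (charmatrix A)).trace := by
  have h1 : A.charpoly = (charmatrix Aᵀ).det := by
    rw [charmatrix_transpose', det_transpose, Matrix.charpoly]
  rw [h1, derivative_det, Matrix.trace]
  refine Finset.sum_congr rfl fun j _ => ?_
  rw [derivative_charmatrix_col, diag_apply, adjugate_apply,
    charmatrix_transpose', updateCol_transpose, det_transpose]

end Aux

/-- Le Verrier–Souriau–Faddeev algorithm: the characteristic polynomial of `A ∈ Mₙ(ℂ)`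
is `det(X·I - A) = X^n - ∑_{k=1}^n (Tr(A_{k-1})/k) X^{n-k}`, where `(A_k)` is the
sequence `A₀ = A`, `A_{k+1} = A·(A_k - (Tr(A_k)/(k+1))·I)`. -/
theorem charpoly_eq_lvsf
    {n : ℕ} (A : Matrix (Fin n) (Fin n) ℂ) :
    A.charpoly =
      X ^ n - ∑ k ∈ Finset.Icc 1 n, C ((lvsfSeq A (k - 1)).trace / k) * X ^ (n - k) := by
  rcases Nat.eq_zero_or_pos n with hn | hn
  · subst hn
    rw [show (Finset.Icc 1 0) = (∅ : Finset ℕ) by rfl]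
    simp [Matrix.charpoly, Matrix.det_isEmpty]
  set P : (Matrix (Fin n) (Fin n) ℂ)[X] := matPolyEquiv (adjugate (charmatrix A)) with hP
  set c : ℕ → ℂ := fun m => A.charpoly.coeff m with hc
  set b : ℕ → Matrix (Fin n) (Fin n) ℂ := fun m => P.coeff m with hb
  have key : (X - Polynomial.C A) * P = (A.charpoly).map (algebraMap ℂ _) := by
    have h := mul_adjugate (charmatrix A)
    apply_fun matPolyEquiv at h
    rwa [_root_.map_mul, matPolyEquiv_charmatrix, matPolyEquiv_smul_one] at h
  have hrec : ∀ m, b m - A * b (m + 1) = c (m + 1) • 1 := by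
    intro m
    have := congrArg (fun q => Polynomial.coeff q (m + 1)) key
    simp only [sub_mul, coeff_sub, coeff_X_mul, coeff_C_mul, coeff_map] at this
    rw [this]
    rw [Algebra.algebraMap_eq_smul_one]
  have h0 : A * b 0 = -(c 0 • 1) := by
    have := congrArg (fun q => Polynomial.coeff q 0) key
    simp only [sub_mul, coeff_sub, mul_coeff_zero, coeff_X_zero, zero_mul, coeff_C_mul,
      coeff_map, zero_sub, coeff_C_zero] at this
    rw [← Algebra.algebraMap_eq_smul_one, ← this, neg_neg]
  haveI : Nonempty (Fin n) := ⟨⟨0, hn⟩⟩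
  have hnat : A.charpoly.natDegree = n := by
    rw [Matrix.charpoly_natDegree_eq_dim, Fintype.card_fin]
  have hbn : b n = 0 := by
    rcases eq_or_ne P 0 with h | h
    · simp [hb, h]
    have hdeg : P.natDegree = n - 1 := by
      have h1 : ((X - Polynomial.C A) * P).natDegree = 1 + P.natDegree := by
        rw [(monic_X_sub_C A).natDegree_mul' h, natDegree_X_sub_C]
      have h2 : ((A.charpoly).map (algebraMap ℂ (Matrix (Fin n) (Fin n) ℂ))).natDegree = n := by
        rw [(Matrix.charpoly_monic A).natDegree_map, hnat]
      rw [key, h2] at h1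
      omega
    have : P.natDegree < n := by omega
    exact coeff_eq_zero_of_natDegree_lt this
  have hcn : c n = 1 := by
    have hm := Matrix.charpoly_monic A
    rw [Monic, leadingCoeff, hnat] at hm
    exact hm
  have hbn1 : b (n - 1) = 1 := by
    have h := hrec (n - 1)
    rw [Nat.sub_add_cancel hn, hbn, mul_zero, sub_zero, hcn, one_smul] at h
    exact h
  have htrb : ∀ m, (b m).trace = ((m : ℂ) + 1) * c (m + 1) := by
    intro m
    have hD := derivative_charpoly A
    have : (b m).trace = (derivative A.charpoly).coeff m := by
      rw [hD, Matrix.trace, Matrix.trace, finset_sum_coeff]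
      refine Finset.sum_congr rfl fun i _ => ?_
      rw [diag_apply, diag_apply, hb]
      exact matPolyEquiv_coeff_apply _ _ _ _
    rw [this, coeff_derivative, mul_comm]
  have htr : ∀ k, 1 ≤ k → k ≤ n → (A * b (n - k)).trace = -(k : ℂ) * c (n - k) := by
    intro k hk1 hkn
    rcases eq_or_lt_of_le hkn with h | h
    · subst h
      rw [Nat.sub_self, h0, trace_neg, trace_smul, trace_one, smul_eq_mul, Fintype.card_fin]
      ring
    · have hm : n - k - 1 + 1 = n - k := by omega
      have hA : A * b (n - k) = b (n - k - 1) - c (n - k) • 1 := by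
        have := hrec (n - k - 1)
        rw [hm] at this
        rw [← this]
        abel
      rw [hA, trace_sub, trace_smul, trace_one, smul_eq_mul, htrb, hm, Fintype.card_fin]
      have : ((n - k - 1 : ℕ) : ℂ) + 1 = ((n - k : ℕ) : ℂ) := by
        rw [← hm]; push_cast; ring
      rw [this]
      have hnk : ((n - k : ℕ) : ℂ) = (n : ℂ) - (k : ℂ) := by
        push_cast [Nat.cast_sub (le_of_lt h)]
        ring
      rw [hnk]
      ring
  have hmain : ∀ k, 1 ≤ k → k ≤ n → lvsfSeq A (k - 1) = A * b (n - k) := by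
    intro k hk1
    induction k, hk1 using Nat.le_induction with
    | base =>
      intro hkn
      simp only [Nat.sub_self, lvsfSeq, hbn1, mul_one]
    | succ k hk ih =>
      intro hkn
      have hklt : k ≤ n := by omega
      have hik := ih hklt
      have hksub : k + 1 - 1 = (k - 1) + 1 := by omega
      rw [hksub, lvsfSeq]
      have hcast : ((k - 1 : ℕ) : ℂ) + 1 = (k : ℂ) := by
        exact_mod_cast congrArg (fun t : ℕ => (t : ℂ)) (Nat.sub_add_cancel hk)
      rw [hik, htr k hk hklt, hcast]
      have hkne : (k : ℂ) ≠ 0 := by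
        exact_mod_cast Nat.cast_ne_zero.mpr (by omega)
      rw [neg_mul, neg_div, mul_div_cancel_left₀ _ hkne, neg_smul, sub_neg_eq_add]
      have : A * b (n - k) + c (n - k) • 1 = b (n - k - 1) := by
        have hm : n - k - 1 + 1 = n - k := by omega
        have := hrec (n - k - 1)
        rw [hm] at this
        rw [← this]
        abel
      rw [this, show n - k - 1 = n - (k + 1) by omega]
  have hTfin : ∀ k, 1 ≤ k → k ≤ n → (lvsfSeq A (k - 1)).trace = -(k : ℂ) * c (n - k) := by
    intro k hk1 hkn
    rw [hmain k hk1 hkn, htr k hk1 hkn]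
  have hsum : ∑ k ∈ Finset.Icc 1 n, C ((lvsfSeq A (k - 1)).trace / k) * X ^ (n - k)
      = -∑ j ∈ Finset.range n, C (c j) * X ^ j := by
    have hicc : Finset.Icc 1 n = Finset.image (· + 1) (Finset.range n) := by
      ext x
      simp only [Finset.mem_Icc, Finset.mem_image, Finset.mem_range]
      constructor
      · intro ⟨h1, h2⟩; exact ⟨x - 1, by omega, by omega⟩
      · rintro ⟨y, hy, rfl⟩; omega
    rw [hicc, Finset.sum_image (by intro x _ y _ h; simp only at h; omega)]
    rw [← Finset.sum_range_reflect (fun j => C (c j) * X ^ j) n, ← Finset.sum_neg_distrib]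
    refine Finset.sum_congr rfl fun i hi => ?_
    have hi' : i < n := Finset.mem_range.mp hi
    have h1 : (1 : ℕ) ≤ i + 1 := by omega
    have h2 : i + 1 ≤ n := by omega
    rw [show i + 1 - 1 = i from rfl] at *
    have ht := hTfin (i + 1) h1 h2
    rw [show i + 1 - 1 = i by omega] at ht
    rw [ht]
    have hkne : ((i + 1 : ℕ) : ℂ) ≠ 0 := by exact_mod_cast (by omega : (i + 1 : ℕ) ≠ 0)
    push_cast at hkne ⊢
    rw [neg_mul, neg_div, mul_div_cancel_left₀ _ hkne]
    rw [show n - (i + 1) = n - 1 - i by omega]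
    rw [map_neg, neg_mul]
  rw [hsum, sub_neg_eq_add]
  have hdeg : A.charpoly.natDegree < n + 1 := by
    rw [Matrix.charpoly_natDegree_eq_dim, Fintype.card_fin]; omega
  conv_lhs => rw [as_sum_range' A.charpoly (n + 1) hdeg]
  rw [Finset.sum_range_succ]
  simp only [← C_mul_X_pow_eq_monomial]
  rw [show A.charpoly.coeff n = c n from rfl, hcn, C_1, one_mul, add_comm]
end
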